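/- arXiv:1412.5734 — 10 statements merged into one kernel-verified Lean document; each statement's English description precedes it below -/
import Mathlib

section
/- For any positive integers r, m, n, every coefficient of the multivariable polynomial ∑_{k=0}^{n-1} (2k+1) · S_k^{(r)}(x_0,…,x_k)^m (a polynomial in the variables x_0,…,x_{n-1} with integer coefficients) is divisible by n. -/
/-- The multi-variable Schmidt polynomial
`S_n^{(r)}(x_0,…,x_n) := ∑_{k=0}^{n} C(n+k,2k)^r · C(2k,k) · x_k`,
viewed as a polynomial with integer coefficients in variables indexed by `ℕ`. -/
noncomputable def schmidtMv (r n : ℕ) : MvPolynomial ℕ ℤ :=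
  ∑ k ∈ Finset.range (n + 1),
    MvPolynomial.C ((((n + k).choose (2 * k)) ^ r * ((2 * k).choose k) : ℕ) : ℤ) *
      MvPolynomial.X k

open Finset

namespace SchmidtAux

def g (j k : ℕ) : ℤ := ((k + j).choose (2 * j) : ℤ)
lemma g_def (j k : ℕ) : g j k = ((k + j).choose (2 * j) : ℤ) := rfl

/-- `U s k = C(k+s,s) * C(k,s)` as an integer. -/
def U (s k : ℕ) : ℤ := ((k + s).choose s : ℤ) * (k.choose s : ℤ)

/-- Trinomial revision: `C(t+j,2j) * C(2j,j) = C(t+j,j) * C(t,j)`. -/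
lemma I3 (t j : ℕ) : ((t + j).choose (2 * j) : ℤ) * ((2 * j).choose j : ℤ)
    = ((t + j).choose j : ℤ) * (t.choose j : ℤ) := by
  rcases le_or_gt j t with h | h
  · have h1 := Nat.choose_mul (n := t + j) (k := 2 * j) (s := j) (by omega)
    have h2 : t + j - j = t := by omega
    have h3 : 2 * j - j = j := by omega
    rw [h2, h3] at h1
    exact_mod_cast h1
  · have h1 : (t + j).choose (2 * j) = 0 := Nat.choose_eq_zero_of_lt (by omega)
    have h2 : t.choose j = 0 := Nat.choose_eq_zero_of_lt h
    simp [h1, h2]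

lemma U_eq (j k : ℕ) : U j k = ((2 * j).choose j : ℤ) * ((k + j).choose (2 * j) : ℤ) := by
  unfold U
  rw [← I3 k j]
  ring

lemma zr1 (n k : ℕ) : ((k : ℤ) + 1) * (n.choose (k + 1) : ℤ)
    = ((n : ℤ) - k) * (n.choose k : ℤ) := by
  rcases le_or_gt k n with h | h
  · have h1 := Nat.choose_succ_right_eq n k
    zify [h] at h1
    linarith
  · have h1 : n.choose k = 0 := Nat.choose_eq_zero_of_lt h
    have h2 : n.choose (k + 1) = 0 := Nat.choose_eq_zero_of_lt (by omega)
    simp [h1, h2]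

lemma zr3 (n s : ℕ) : ((s : ℤ) + 1) * ((n + 1).choose (s + 1) : ℤ)
    = ((n : ℤ) + 1) * (n.choose s : ℤ) := by
  have h1 := Nat.add_one_mul_choose_eq n s
  zify at h1
  push_cast at h1
  linarith

lemma zr2 (n j : ℕ) : ((n : ℤ) + 1) * (n.choose j : ℤ)
    = ((n : ℤ) + 1 - j) * ((n + 1).choose j : ℤ) := by
  rcases le_or_gt j (n + 1) with h | h
  · have h1 := Nat.choose_mul_succ_eq n j
    zify [h] at h1
    linarith
  · have h1 : n.choose j = 0 := Nat.choose_eq_zero_of_lt (by omega)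
    have h2 : (n + 1).choose j = 0 := Nat.choose_eq_zero_of_lt (by omega)
    simp [h1, h2]

/-- Recurrence: `(s+1)² U_{s+1}(k) = (k(k+1) - s(s+1)) U_s(k)`. -/
lemma RR (s k : ℕ) : ((s : ℤ) + 1) ^ 2 * U (s + 1) k
    = ((k : ℤ) * ((k : ℤ) + 1) - (s : ℤ) * ((s : ℤ) + 1)) * U s k := by
  have h1 := zr1 k s
  have h2 : ((s : ℤ) + 1) * ((k + s + 1).choose (s + 1) : ℤ)
      = ((k : ℤ) + (s : ℤ) + 1) * ((k + s).choose s : ℤ) := by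
    have := zr3 (k + s) s
    push_cast at this ⊢
    linarith
  have hind : k + (s + 1) = k + s + 1 := by omega
  unfold U
  rw [hind]
  linear_combination (((s : ℤ) + 1) * (k.choose (s + 1) : ℤ)) * h2
    + (((k : ℤ) + (s : ℤ) + 1) * ((k + s).choose s : ℤ)) * h1
/-- The key coefficient identity for the induction step of `N2`. -/
lemma star (j s i : ℕ) :
    ((j + s).choose s : ℤ) * ( ((s + i).choose j : ℤ) * (j.choose i : ℤ) * ((s : ℤ) + i + 1) ^ 2
      + ((s + i + 1).choose j : ℤ) * (j.choose (i + 1) : ℤ) * ((i : ℤ) + 1) * (2 * (s : ℤ) + i + 2) )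
    = ((s : ℤ) + 1) ^ 2 * ((j + s + 1).choose (s + 1) : ℤ) * ((s + 1 + i).choose j : ℤ)
      * (j.choose i : ℤ) := by
  have r1 := zr1 j i
  have r2 := zr2 (s + i) j
  have r3 := zr3 (j + s) s
  push_cast at r2 r3
  have hidx : s + 1 + i = s + i + 1 := by omega
  rw [hidx]
  have hpos : ((i : ℤ) + 1) * ((s : ℤ) + i + 1) ≠ 0 := by positivity
  apply mul_left_cancel₀ hpos
  set A := ((s + i).choose j : ℤ)
  set B := ((s + i + 1).choose j : ℤ)
  set P := (j.choose i : ℤ)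
  set Q := (j.choose (i + 1) : ℤ)
  set D := ((j + s).choose s : ℤ)
  set E := ((j + s + 1).choose (s + 1) : ℤ)
  linear_combination (((i : ℤ) + 1) * D * P * ((s : ℤ) + i + 1) ^ 2) * r2
    + (((i : ℤ) + 1) * ((s : ℤ) + i + 1) * D * B * (2 * (s : ℤ) + i + 2)) * r1
    - (((i : ℤ) + 1) * ((s : ℤ) + i + 1) * ((s : ℤ) + 1) * B * P) * r3
/-- Product rule: `U j · U s = C(j+s,s) ∑_i C(s+i,j) C(j,i) U (s+i)`. -/
lemma N2 : ∀ s j k : ℕ, U j k * U s k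
    = ((j + s).choose s : ℤ) * ∑ i ∈ range (j + 1),
        ((s + i).choose j : ℤ) * (j.choose i : ℤ) * U (s + i) k := by
  intro s
  induction s with
  | zero =>
    intro j k
    rw [Finset.sum_eq_single j (fun i hi hne => by
        have hij : i < j := by
          have := Finset.mem_range.mp hi
          omega
        simp [Nat.choose_eq_zero_of_lt hij])
      (fun h => absurd (Finset.self_mem_range_succ j) h)]
    simp [U]
  | succ s ih =>
    intro j k
    have hc : ((s : ℤ) + 1) ^ 2 ≠ 0 := by positivity
    apply mul_left_cancel₀ hc
    have key : ∀ i : ℕ,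
        ((k : ℤ) * ((k : ℤ) + 1) - (s : ℤ) * ((s : ℤ) + 1)) * U (s + i) k
          = ((s : ℤ) + (i : ℤ) + 1) ^ 2 * U (s + i + 1) k
            + (i : ℤ) * (2 * (s : ℤ) + (i : ℤ) + 1) * U (s + i) k := by
      intro i
      have h := RR (s + i) k
      push_cast at h
      linear_combination -h
    have hshift :
        ∑ i ∈ range (j + 1), (i : ℤ) * (((s + i).choose j : ℤ) * (j.choose i : ℤ) *
            ((2 * (s : ℤ) + (i : ℤ) + 1) * U (s + i) k))
          = ∑ i ∈ range (j + 1), ((i : ℤ) + 1) * (((s + i + 1).choose j : ℤ) *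
              (j.choose (i + 1) : ℤ) * ((2 * (s : ℤ) + (i : ℤ) + 2) * U (s + i + 1) k)) := by
      rw [Finset.sum_range_succ', Finset.sum_range_succ]
      have h1 : (j.choose (j + 1) : ℤ) = 0 := by simp [Nat.choose_succ_self]
      rw [h1]
      simp only [Nat.cast_zero, zero_mul, mul_zero, add_zero]
      refine Finset.sum_congr rfl fun i _ => ?_
      have h2 : s + (i + 1) = s + i + 1 := rfl
      rw [h2]
      push_cast
      ring
    calc ((s : ℤ) + 1) ^ 2 * (U j k * U (s + 1) k)
        = U j k * (((s : ℤ) + 1) ^ 2 * U (s + 1) k) := by ring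
      _ = U j k * (((k : ℤ) * ((k : ℤ) + 1) - (s : ℤ) * ((s : ℤ) + 1)) * U s k) := by
          rw [RR]
      _ = ((k : ℤ) * ((k : ℤ) + 1) - (s : ℤ) * ((s : ℤ) + 1)) * (U j k * U s k) := by ring
      _ = ((k : ℤ) * ((k : ℤ) + 1) - (s : ℤ) * ((s : ℤ) + 1)) *
            (((j + s).choose s : ℤ) * ∑ i ∈ range (j + 1),
              ((s + i).choose j : ℤ) * (j.choose i : ℤ) * U (s + i) k) := by rw [ih]
      _ = ((j + s).choose s : ℤ) * ∑ i ∈ range (j + 1),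
            ((s + i).choose j : ℤ) * (j.choose i : ℤ) *
              (((s : ℤ) + (i : ℤ) + 1) ^ 2 * U (s + i + 1) k
                + (i : ℤ) * (2 * (s : ℤ) + (i : ℤ) + 1) * U (s + i) k) := by
          rw [mul_left_comm]
          congr 1
          rw [Finset.mul_sum]
          refine Finset.sum_congr rfl fun i _ => ?_
          linear_combination (((s + i).choose j : ℤ) * (j.choose i : ℤ)) * key i
      _ = ((j + s).choose s : ℤ) *
            ((∑ i ∈ range (j + 1), ((s + i).choose j : ℤ) * (j.choose i : ℤ) *
                (((s : ℤ) + (i : ℤ) + 1) ^ 2 * U (s + i + 1) k))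
              + ∑ i ∈ range (j + 1), (i : ℤ) * (((s + i).choose j : ℤ) * (j.choose i : ℤ) *
                ((2 * (s : ℤ) + (i : ℤ) + 1) * U (s + i) k))) := by
          congr 1
          rw [← Finset.sum_add_distrib]
          exact Finset.sum_congr rfl fun i _ => by ring
      _ = ∑ i ∈ range (j + 1),
            ((s : ℤ) + 1) ^ 2 * (((j + s + 1).choose (s + 1) : ℤ) *
              (((s + 1 + i).choose j : ℤ) * (j.choose i : ℤ) * U (s + 1 + i) k)) := by
          rw [hshift, mul_add, Finset.mul_sum, Finset.mul_sum, ← Finset.sum_add_distrib]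
          refine Finset.sum_congr rfl fun i _ => ?_
          have hidx : s + 1 + i = s + i + 1 := by omega
          have hU : U (s + 1 + i) k = U (s + i + 1) k := by rw [hidx]
          have hst := star j s i
          rw [hU]
          linear_combination (U (s + i + 1) k) * hst
      _ = ((s : ℤ) + 1) ^ 2 * (((j + (s + 1)).choose (s + 1) : ℤ) * ∑ i ∈ range (j + 1),
            ((s + 1 + i).choose j : ℤ) * (j.choose i : ℤ) * U (s + 1 + i) k) := by
          rw [show j + (s + 1) = j + s + 1 from by omega, Finset.mul_sum, Finset.mul_sum]
/-- Exact evaluation: `∑_{k<n} (2k+1) U l k = n · C(2l+1,l) · C(n+l,2l+1)`. -/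
lemma N1 (l n : ℕ) : ∑ k ∈ range n, (2 * (k : ℤ) + 1) * U l k
    = (n : ℤ) * ((2 * l + 1).choose l : ℤ) * ((n + l).choose (2 * l + 1) : ℤ) := by
  induction n with
  | zero => simp
  | succ n ih =>
    rw [Finset.sum_range_succ, ih]
    have e1 : ((l : ℤ) + 1) * ((2 * l + 1).choose l : ℤ)
        = (2 * (l : ℤ) + 1) * ((2 * l).choose l : ℤ) := by
      have hsym : (2 * l + 1).choose l = (2 * l + 1).choose (l + 1) := by
        have := Nat.choose_symm (n := 2 * l + 1) (k := l + 1) (by omega)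
        rw [show 2 * l + 1 - (l + 1) = l from by omega] at this
        exact this
      rw [hsym]
      exact zr3 (2 * l) l
    have e2 : ((n + 1 + l).choose (2 * l + 1) : ℤ)
        = ((n + l).choose (2 * l) : ℤ) + ((n + l).choose (2 * l + 1) : ℤ) := by
      rw [show n + 1 + l = (n + l) + 1 from by omega]
      exact_mod_cast congrArg (Nat.cast : ℕ → ℤ) (Nat.choose_succ_succ' (n + l) (2 * l))
    have e3 : (2 * (l : ℤ) + 1) * ((n + l).choose (2 * l + 1) : ℤ)
        = ((n : ℤ) - l) * ((n + l).choose (2 * l) : ℤ) := by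
      have := zr1 (n + l) (2 * l)
      push_cast at this ⊢
      linarith
    have hU : U l n = ((2 * l).choose l : ℤ) * ((n + l).choose (2 * l) : ℤ) := U_eq l n
    have hpos : ((l : ℤ) + 1) ≠ 0 := by positivity
    apply mul_left_cancel₀ hpos
    rw [hU]
    push_cast
    linear_combination ((n : ℤ) * ((n + l).choose (2 * l + 1) : ℤ)
        - ((n : ℤ) + 1) * ((n + 1 + l).choose (2 * l + 1) : ℤ)) * e1
      - (((n : ℤ) + 1) * (2 * (l : ℤ) + 1) * ((2 * l).choose l : ℤ)) * e2
      - ((2 * l).choose l : ℤ) * e3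
/-- `f` has an integer expansion in the `U` basis whose coefficients keep enough
divisibility by `C(2j,j)` to absorb one more factor `C(k+j,2j)`. -/
def Good (j : ℕ) (f : ℕ → ℤ) : Prop :=
  ∃ N : ℕ, ∃ c : ℕ → ℤ,
    (∀ s, ((2 * j).choose j : ℤ) ∣ c s * ((j + s).choose s : ℤ)) ∧
    ∀ k, f k = ∑ s ∈ range N, c s * U s k

lemma central_ne_zero (j : ℕ) : (((2 * j).choose j : ℤ)) ≠ 0 := by
  have := Nat.choose_pos (show j ≤ 2 * j by omega)
  exact_mod_cast this.ne'

lemma good_base (j : ℕ) : Good j (fun k => ((2 * j).choose j : ℤ) * g j k) := by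
  refine ⟨j + 1, fun s => if s = j then 1 else 0, ?_, ?_⟩
  · intro s
    by_cases h : s = j
    · subst h
      dsimp only
      rw [if_pos rfl, one_mul, show s + s = 2 * s from by omega]
    · simp [h]
  · intro k
    dsimp only
    rw [Finset.sum_eq_single j (fun i _ hne => by simp [hne])
      (fun h => absurd (Finset.self_mem_range_succ j) h)]
    rw [if_pos rfl, one_mul, U_eq, g_def]

lemma good_mul_g {j : ℕ} {f : ℕ → ℤ} (hgood : Good j f) :
    Good j (fun k => g j k * f k) := by
  obtain ⟨N, c, hdvd, hf⟩ := hgood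
  set G : ℤ := ((2 * j).choose j : ℤ) with hG
  have hGne : G ≠ 0 := central_ne_zero j
  set e : ℕ → ℤ := fun s => c s * ((j + s).choose s : ℤ) / G with he
  have hce : ∀ s, c s * ((j + s).choose s : ℤ) = G * e s :=
    fun s => (Int.mul_ediv_cancel' (hdvd s)).symm
  refine ⟨N + j + 1,
    fun t => ∑ s ∈ range N,
      if s ≤ t ∧ t ≤ s + j then e s * (t.choose j : ℤ) * (j.choose (t - s) : ℤ) else 0,
    ?_, ?_⟩
  · intro t
    rw [Finset.sum_mul]
    refine Finset.dvd_sum fun s _ => ?_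
    by_cases h : s ≤ t ∧ t ≤ s + j
    · rw [if_pos h]
      have h1 : ((j + t).choose t : ℤ) = ((t + j).choose j : ℤ) := by
        have h2 := Nat.choose_symm (show j ≤ j + t by omega)
        rw [show j + t - j = t from by omega] at h2
        rw [show t + j = j + t from by omega]
        exact_mod_cast h2
      refine ⟨e s * (j.choose (t - s) : ℤ) * ((t + j).choose (2 * j) : ℤ), ?_⟩
      have h3 := I3 t j
      calc e s * (t.choose j : ℤ) * (j.choose (t - s) : ℤ) * ((j + t).choose t : ℤ)
          = e s * (j.choose (t - s) : ℤ) * (((t + j).choose j : ℤ) * (t.choose j : ℤ)) := by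
            rw [h1]; ring
        _ = e s * (j.choose (t - s) : ℤ) * (((t + j).choose (2 * j) : ℤ) * G) := by rw [← h3]
        _ = G * (e s * (j.choose (t - s) : ℤ) * ((t + j).choose (2 * j) : ℤ)) := by ring
    · rw [if_neg h, zero_mul]
      exact dvd_zero G
  · intro k
    have hstep : ∀ s, c s * (g j k * U s k)
        = e s * ∑ i ∈ range (j + 1),
            ((s + i).choose j : ℤ) * (j.choose i : ℤ) * U (s + i) k := by
      intro s
      apply mul_left_cancel₀ hGne
      calc G * (c s * (g j k * U s k)) = c s * ((G * g j k) * U s k) := by ring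
        _ = c s * (U j k * U s k) := by rw [g_def, U_eq j k, ← hG]
        _ = c s * (((j + s).choose s : ℤ) * ∑ i ∈ range (j + 1),
              ((s + i).choose j : ℤ) * (j.choose i : ℤ) * U (s + i) k) := by rw [N2]
        _ = (c s * ((j + s).choose s : ℤ)) * ∑ i ∈ range (j + 1),
              ((s + i).choose j : ℤ) * (j.choose i : ℤ) * U (s + i) k := by ring
        _ = (G * e s) * ∑ i ∈ range (j + 1),
              ((s + i).choose j : ℤ) * (j.choose i : ℤ) * U (s + i) k := by rw [hce]
        _ = G * (e s * ∑ i ∈ range (j + 1),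
              ((s + i).choose j : ℤ) * (j.choose i : ℤ) * U (s + i) k) := by ring
    calc g j k * f k = ∑ s ∈ range N, c s * (g j k * U s k) := by
          rw [hf k, Finset.mul_sum]
          exact Finset.sum_congr rfl fun s _ => by ring
      _ = ∑ s ∈ range N, e s * ∑ i ∈ range (j + 1),
            ((s + i).choose j : ℤ) * (j.choose i : ℤ) * U (s + i) k :=
          Finset.sum_congr rfl fun s _ => hstep s
      _ = ∑ s ∈ range N, ∑ t ∈ range (N + j + 1),
            (if s ≤ t ∧ t ≤ s + j then e s * (t.choose j : ℤ) * (j.choose (t - s) : ℤ) else 0)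
              * U t k := by
          refine Finset.sum_congr rfl fun s hs => ?_
          have hsN : s < N := Finset.mem_range.mp hs
          have hconv : ∀ t, (if s ≤ t ∧ t ≤ s + j then e s * (t.choose j : ℤ)
                * (j.choose (t - s) : ℤ) else 0) * U t k
              = if s ≤ t ∧ t ≤ s + j then e s * (t.choose j : ℤ) * (j.choose (t - s) : ℤ)
                  * U t k else 0 := by
            intro t
            by_cases h : s ≤ t ∧ t ≤ s + j
            · rw [if_pos h, if_pos h]
            · rw [if_neg h, if_neg h, zero_mul]
          rw [Finset.sum_congr rfl fun t _ => hconv t, ← Finset.sum_filter]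
          have hfil : (range (N + j + 1)).filter (fun t => s ≤ t ∧ t ≤ s + j)
              = (range (j + 1)).image (fun i => s + i) := by
            ext t
            simp only [Finset.mem_filter, Finset.mem_range, Finset.mem_image]
            constructor
            · rintro ⟨ht, h1, h2⟩
              exact ⟨t - s, by omega, by omega⟩
            · rintro ⟨i, hi, rfl⟩
              omega
          rw [hfil, Finset.sum_image (fun x _ y _ h => by omega)]
          rw [Finset.mul_sum]
          refine Finset.sum_congr rfl fun i _ => ?_
          rw [show s + i - s = i from by omega]
          ring
      _ = ∑ t ∈ range (N + j + 1), (∑ s ∈ range N,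
            if s ≤ t ∧ t ≤ s + j then e s * (t.choose j : ℤ) * (j.choose (t - s) : ℤ) else 0)
              * U t k := by
          rw [Finset.sum_comm]
          exact Finset.sum_congr rfl fun t _ => (Finset.sum_mul _ _ _).symm

lemma good_pow (j : ℕ) : ∀ r : ℕ, Good j (fun k => ((2 * j).choose j : ℤ) * (g j k) ^ (r + 1))
  | 0 => by
    have h := good_base j
    have : (fun k => ((2 * j).choose j : ℤ) * g j k)
        = (fun k => ((2 * j).choose j : ℤ) * (g j k) ^ (0 + 1)) := by
      funext k; ring
    rwa [this] at h
  | (r + 1) => by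
    have h := good_mul_g (good_pow j r)
    have : (fun k => g j k * (((2 * j).choose j : ℤ) * (g j k) ^ (r + 1)))
        = (fun k => ((2 * j).choose j : ℤ) * (g j k) ^ (r + 1 + 1)) := by
      funext k; ring
    rwa [this] at h
abbrev R := MvPolynomial ℕ ℤ

/-- Generator sequences `k ↦ U s k · p`. -/
noncomputable def gen (s : ℕ) (p : R) : ℕ → R := fun k => MvPolynomial.C (U s k) * p

lemma gen_apply (s : ℕ) (p : R) (k : ℕ) : gen s p k = MvPolynomial.C (U s k) * p := rfl

def SS : Set (ℕ → R) := {w | ∃ s p, w = gen s p}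

noncomputable def MM : Submodule ℤ (ℕ → R) := Submodule.span ℤ SS

lemma gen_mem (s : ℕ) (p : R) : gen s p ∈ MM := Submodule.subset_span ⟨s, p, rfl⟩

lemma gen_mul_mem (s s' : ℕ) (p q : R) : gen s p * gen s' q ∈ MM := by
  have hfun : gen s p * gen s' q
      = ∑ i ∈ range (s + 1),
          (((s + s').choose s' : ℤ) * (((s' + i).choose s : ℤ) * (s.choose i : ℤ)))
            • gen (s' + i) (p * q) := by
    funext k
    rw [Pi.mul_apply, Finset.sum_apply]
    simp only [Pi.smul_apply, gen_apply, MvPolynomial.smul_eq_C_mul]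
    calc MvPolynomial.C (U s k) * p * (MvPolynomial.C (U s' k) * q)
        = MvPolynomial.C (U s k * U s' k) * (p * q) := by rw [map_mul]; ring
      _ = MvPolynomial.C (((s + s').choose s' : ℤ) * ∑ i ∈ range (s + 1),
            ((s' + i).choose s : ℤ) * (s.choose i : ℤ) * U (s' + i) k) * (p * q) := by
          rw [N2 s' s k]
      _ = _ := by
          rw [Finset.mul_sum, map_sum, Finset.sum_mul]
          refine Finset.sum_congr rfl fun i _ => ?_
          rw [show ((s + s').choose s' : ℤ) * (((s' + i).choose s : ℤ) * (s.choose i : ℤ)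
                * U (s' + i) k)
              = (((s + s').choose s' : ℤ) * (((s' + i).choose s : ℤ) * (s.choose i : ℤ)))
                * U (s' + i) k from by ring]
          rw [map_mul]
          ring
  rw [hfun]
  exact Submodule.sum_mem _ fun i _ => Submodule.smul_mem _ _ (gen_mem _ _)

lemma MM_mul_mem {f h : ℕ → R} (hf : f ∈ MM) (hh : h ∈ MM) : f * h ∈ MM := by
  have h1 : f * h ∈ MM * MM := Submodule.mul_mem_mul hf hh
  have h2 : (MM * MM : Submodule ℤ (ℕ → R)) ≤ MM := by
    rw [MM, Submodule.span_mul_span]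
    refine Submodule.span_le.mpr ?_
    rintro x hx
    rw [Set.mem_mul] at hx
    obtain ⟨a, ⟨s, p, rfl⟩, b, ⟨s', q, rfl⟩, rfl⟩ := hx
    exact gen_mul_mem s s' p q
  exact h2 h1

lemma MM_one : (1 : ℕ → R) ∈ MM := by
  have h : (1 : ℕ → R) = gen 0 1 := by
    funext k
    rw [gen_apply]
    simp [U]
  rw [h]
  exact gen_mem 0 1

lemma MM_pow {f : ℕ → R} (hf : f ∈ MM) : ∀ m : ℕ, f ^ m ∈ MM
  | 0 => by rw [pow_zero]; exact MM_one
  | (m + 1) => by rw [pow_succ]; exact MM_mul_mem (MM_pow hf m) hf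

/-- Sequences whose weighted sum over `range n` is divisible by `n`. -/
noncomputable def W (n : ℕ) : Submodule ℤ (ℕ → R) where
  carrier := {f | ∃ P : R, ∑ k ∈ range n, (2 * (k : ℤ) + 1) • f k = (n : ℤ) • P}
  zero_mem' := ⟨0, by simp⟩
  add_mem' := by
    rintro f h ⟨P, hP⟩ ⟨Q, hQ⟩
    refine ⟨P + Q, ?_⟩
    have : ∀ k : ℕ, (2 * (k : ℤ) + 1) • (f + h) k
        = (2 * (k : ℤ) + 1) • f k + (2 * (k : ℤ) + 1) • h k := by
      intro k; rw [Pi.add_apply, smul_add]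
    rw [Finset.sum_congr rfl fun k _ => this k, Finset.sum_add_distrib, hP, hQ, smul_add]
  smul_mem' := by
    rintro z f ⟨P, hP⟩
    refine ⟨z • P, ?_⟩
    have : ∀ k : ℕ, (2 * (k : ℤ) + 1) • (z • f) k = z • ((2 * (k : ℤ) + 1) • f k) := by
      intro k; rw [Pi.smul_apply, smul_comm]
    rw [Finset.sum_congr rfl fun k _ => this k, ← Finset.smul_sum, hP, smul_comm]

lemma gen_mem_W (n s : ℕ) (p : R) : gen s p ∈ W n := by
  refine ⟨MvPolynomial.C (((2 * s + 1).choose s : ℤ) * ((n + s).choose (2 * s + 1) : ℤ)) * p, ?_⟩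
  have h1 : ∀ k : ℕ, (2 * (k : ℤ) + 1) • gen s p k
      = MvPolynomial.C ((2 * (k : ℤ) + 1) * U s k) * p := by
    intro k
    rw [gen_apply, MvPolynomial.smul_eq_C_mul, map_mul]
    ring
  rw [Finset.sum_congr rfl fun k _ => h1 k]
  rw [← Finset.sum_mul, ← map_sum, N1 s n, MvPolynomial.smul_eq_C_mul]
  rw [show ((n : ℤ)) * ((2 * s + 1).choose s : ℤ) * ((n + s).choose (2 * s + 1) : ℤ)
      = (n : ℤ) * (((2 * s + 1).choose s : ℤ) * ((n + s).choose (2 * s + 1) : ℤ)) from by ring]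
  rw [map_mul, map_mul]
  ring

lemma MM_le_W (n : ℕ) : MM ≤ W n := by
  refine Submodule.span_le.mpr ?_
  rintro x ⟨s, p, rfl⟩
  exact gen_mem_W n s p

end SchmidtAux

open SchmidtAux in
/-- For any positive integers `r`, `m`, `n`, every coefficient of
`∑_{k=0}^{n-1} (2k+1) · S_k^{(r)}(x_0,…,x_k)^m` is divisible by `n`. -/
theorem sum_schmidtMv_pow_dvd (r m n : ℕ) (hr : 0 < r) (hm : 0 < m) (hn : 0 < n) :
    ∀ d : ℕ →₀ ℕ,
      (n : ℤ) ∣ MvPolynomial.coeff d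
        (∑ k ∈ Finset.range n, (2 * (k : ℤ) + 1) • (schmidtMv r k) ^ m) := by
  intro d
  -- the globally-defined version of the Schmidt polynomial, for k < n
  set v : ℕ → R := fun k => ∑ j ∈ range n,
    MvPolynomial.C (((2 * j).choose j : ℤ) * (g j k) ^ r) * MvPolynomial.X j with hv
  have hveq : ∀ k ∈ range n, schmidtMv r k = v k := by
    intro k hk
    have hkn : k < n := Finset.mem_range.mp hk
    rw [hv]
    show (∑ j ∈ Finset.range (k + 1),
        MvPolynomial.C ((((k + j).choose (2 * j)) ^ r * ((2 * j).choose j) : ℕ) : ℤ) *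
          MvPolynomial.X j) = _
    have hterm : ∀ j, MvPolynomial.C ((((k + j).choose (2 * j)) ^ r * ((2 * j).choose j) : ℕ) : ℤ)
          * MvPolynomial.X j
        = MvPolynomial.C (((2 * j).choose j : ℤ) * (g j k) ^ r) * MvPolynomial.X j := by
      intro j
      congr 1
      rw [g_def]
      push_cast
      ring
    rw [Finset.sum_congr rfl fun j _ => hterm j]
    refine Finset.sum_subset (Finset.range_subset_range.mpr (by omega)) ?_
    intro j _ hj
    have hkj : k < j := by
      rcases Nat.lt_or_ge j (k + 1) with h | h
      · exact absurd (Finset.mem_range.mpr h) hj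
      · omega
    have h0 : (k + j).choose (2 * j) = 0 := Nat.choose_eq_zero_of_lt (by omega)
    rw [g_def, h0]
    rw [show ((0 : ℕ) : ℤ) = (0 : ℤ) from rfl, zero_pow hr.ne', mul_zero, map_zero, zero_mul]
  have hvmem : v ∈ MM := by
    have hsplit : v = ∑ j ∈ range n,
        (fun k => MvPolynomial.C (((2 * j).choose j : ℤ) * (g j k) ^ r) * MvPolynomial.X j) := by
      funext k
      rw [hv, Finset.sum_apply]
    rw [hsplit]
    refine Submodule.sum_mem _ fun j _ => ?_
    obtain ⟨N, c, -, hc⟩ := good_pow j (r - 1)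
    have hr' : r - 1 + 1 = r := by omega
    rw [hr'] at hc
    have heq : (fun k => MvPolynomial.C (((2 * j).choose j : ℤ) * (g j k) ^ r)
          * MvPolynomial.X j)
        = ∑ s ∈ range N, c s • gen s (MvPolynomial.X j) := by
      funext k
      have hck := hc k
      dsimp only at hck ⊢
      rw [hck, Finset.sum_apply, map_sum, Finset.sum_mul]
      refine Finset.sum_congr rfl fun s _ => ?_
      rw [Pi.smul_apply, gen_apply, MvPolynomial.smul_eq_C_mul, map_mul]
      ring
    rw [heq]
    exact Submodule.sum_mem _ fun s _ => Submodule.smul_mem _ _ (gen_mem _ _)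
  have hpow : v ^ m ∈ MM := MM_pow hvmem m
  obtain ⟨P, hP⟩ := MM_le_W n hpow
  have hsum : ∑ k ∈ Finset.range n, (2 * (k : ℤ) + 1) • (schmidtMv r k) ^ m
      = ∑ k ∈ range n, (2 * (k : ℤ) + 1) • (v ^ m) k := by
    refine Finset.sum_congr rfl fun k hk => ?_
    rw [hveq k hk, Pi.pow_apply]
  rw [hsum, hP, MvPolynomial.coeff_smul]
  exact ⟨MvPolynomial.coeff d P, by rw [smul_eq_mul]⟩
end

section
/- For any positive integers r, m, n, every coefficient of the multivariable polynomial ∑_{k=0}^{n-1} (−1)^k (2k+1) · S_k^{(r)}(x_0,…,x_k)^m (a polynomial in the variables x_0,…,x_{n-1} with integer coefficients) is divisible by n. -/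
open Finset

/-- `sw l k = C(k+l,l) * C(k,l)` as an integer. -/
def sw (l k : ℕ) : ℤ := ((k + l).choose l : ℤ) * ((k.choose l : ℕ) : ℤ)

/-- general subset-chain identity (no upper hypothesis). -/
lemma chainN (a b c : ℕ) (h : c ≤ b) :
    a.choose b * b.choose c = a.choose c * (a - c).choose (b - c) := by
  rcases le_or_gt b a with hba | hba
  · exact Nat.choose_mul h
  · rw [Nat.choose_eq_zero_of_lt hba]
    rcases le_or_gt c a with hca | hca
    · rw [Nat.choose_eq_zero_of_lt (by omega : a - c < b - c), zero_mul, mul_zero]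
    · rw [Nat.choose_eq_zero_of_lt hca, zero_mul, zero_mul]

/-- `C(2j,j) * C(k+j,2j) = sw j k` -/
lemma swEq (j k : ℕ) : (((2 * j).choose j : ℕ) : ℤ) * (((k + j).choose (2 * j) : ℕ) : ℤ) = sw j k := by
  have h := chainN (k + j) (2 * j) j (by omega)
  rw [(by omega : k + j - j = k), (by omega : 2 * j - j = j)] at h
  unfold sw
  rw [mul_comm]
  exact_mod_cast congrArg (Nat.cast : ℕ → ℤ) h

/-- absorption: `(k+1) C(n,k+1) = (n-k) C(n,k)` over `ℤ`. -/
lemma abs1 (n k : ℕ) : ((k : ℤ) + 1) * (n.choose (k + 1) : ℤ) = ((n : ℤ) - k) * (n.choose k : ℤ) := by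
  rcases le_or_gt k n with h | h
  · have := Nat.choose_succ_right_eq n k
    have h2 := congrArg (fun x : ℕ => (x : ℤ)) this
    push_cast [h] at h2
    linarith
  · rw [Nat.choose_eq_zero_of_lt h, Nat.choose_eq_zero_of_lt (by omega)]
    simp

/-- absorption: `(n+1-k) C(n+1,k) = (n+1) C(n,k)` over `ℤ`. -/
lemma abs2 (n k : ℕ) : ((n : ℤ) + 1 - k) * ((n + 1).choose k : ℤ) = ((n : ℤ) + 1) * (n.choose k : ℤ) := by
  rcases le_or_gt k (n + 1) with h | h
  · have := Nat.choose_mul_succ_eq n k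
    have h2 := congrArg (fun x : ℕ => (x : ℤ)) this
    push_cast [h] at h2
    linarith
  · rw [Nat.choose_eq_zero_of_lt h, Nat.choose_eq_zero_of_lt (by omega)]
    simp

/-- `(n+1) C(n,k) = (k+1) C(n+1,k+1)` over `ℤ`. -/
lemma succCast (n k : ℕ) : ((n : ℤ) + 1) * (n.choose k : ℤ) = ((k : ℤ) + 1) * ((n + 1).choose (k + 1) : ℤ) := by
  have := Nat.add_one_mul_choose_eq n k
  have h2 := congrArg (fun x : ℕ => (x : ℤ)) this
  push_cast at h2
  linarith

/-- key recurrence: `(k(k+1) - l(l+1)) sw_l(k) = (l+1)^2 sw_{l+1}(k)`. -/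
lemma recur (l k : ℕ) :
    ((k : ℤ) * (k + 1) - l * (l + 1)) * sw l k = ((l : ℤ) + 1) ^ 2 * sw (l + 1) k := by
  have h1 : ((k : ℤ) + l + 1) * ((k + l).choose l : ℤ) = ((l : ℤ) + 1) * ((k + l + 1).choose (l + 1) : ℤ) := by
    have := succCast (k + l) l
    push_cast at this ⊢
    linarith
  have h2 := abs1 k l
  unfold sw
  rw [show k + (l + 1) = k + l + 1 from by omega]
  push_cast
  linear_combination ((k:ℤ) - l) * ((k.choose l : ℕ) : ℤ) * h1
    - ((l:ℤ) + 1) * (((k + l + 1).choose (l + 1) : ℕ) : ℤ) * h2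

def c3 (i j l : ℕ) : ℤ :=
  (((i + j).choose l : ℕ) : ℤ) * ((l.choose i : ℕ) : ℤ) * ((l.choose j : ℕ) : ℤ)

lemma key3a (i j l : ℕ) :
    ((i : ℤ) + 1) ^ 2 * c3 (i + 1) j (l + 1)
      = (((l : ℤ) + 1) * ((l : ℤ) + 2) - (i : ℤ) * ((i : ℤ) + 1)) * c3 i j (l + 1)
        + ((l : ℤ) + 1) ^ 2 * c3 i j l := by
  unfold c3
  rw [show i + 1 + j = i + j + 1 from by omega]
  have r1 := abs1 (l + 1) i
  have r2 : (((i + j + 1).choose (l + 1) : ℕ) : ℤ)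
      = (((i + j).choose l : ℕ) : ℤ) + (((i + j).choose (l + 1) : ℕ) : ℤ) := by
    exact_mod_cast congrArg (fun x : ℕ => (x : ℤ)) (Nat.choose_succ_succ' (i + j) l)
  have r3 := abs1 (i + j) l
  have r4 := abs2 l i
  have r5 := abs2 l j
  push_cast at r1 r3 r4 r5 ⊢
  linear_combination
    (((i:ℤ)+1) * (((i + j + 1).choose (l + 1) : ℕ) : ℤ) * (((l+1).choose j : ℕ) : ℤ)) * r1
    + (((l:ℤ)+1-i) * ((i:ℤ)+1) * (((l+1).choose i : ℕ) : ℤ) * (((l+1).choose j : ℕ) : ℤ)) * r2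
    - (((l:ℤ)+1-i) * (((l+1).choose i : ℕ) : ℤ) * (((l+1).choose j : ℕ) : ℤ)) * r3
    + (((l:ℤ)+1-j) * (((i + j).choose l : ℕ) : ℤ) * (((l+1).choose j : ℕ) : ℤ)) * r4
    + (((l:ℤ)+1) * (((i + j).choose l : ℕ) : ℤ) * ((l.choose i : ℕ) : ℤ)) * r5

lemma key3b (i j : ℕ) :
    ((i : ℤ) + 1) ^ 2 * c3 (i + 1) j 0
      = ((0 : ℤ) * (0 + 1) - (i : ℤ) * ((i : ℤ) + 1)) * c3 i j 0 := by
  unfold c3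
  rcases i with _ | i <;> simp

lemma lemA (i : ℕ) : ∀ j k, sw i k * sw j k = ∑ l ∈ range (i + j + 1), c3 i j l * sw l k := by
  induction i with
  | zero =>
    intro j k
    have h0 : sw 0 k = 1 := by unfold sw; simp
    rw [h0, one_mul, show 0 + j + 1 = j + 1 from by omega]
    rw [Finset.sum_eq_single j]
    · unfold c3; simp
    · intro l _ hlj
      have : (j.choose l) * (l.choose j) = 0 := by
        rcases Nat.lt_or_ge l j with h | h
        · rw [Nat.choose_eq_zero_of_lt h, mul_zero]
        · rw [Nat.choose_eq_zero_of_lt (by omega), zero_mul]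
      unfold c3
      rw [show 0 + j = j from by omega]
      rcases Nat.mul_eq_zero.mp this with h | h <;> simp [h]
    · intro h
      exact absurd (self_mem_range_succ j) h
  | succ i IH =>
    intro j k
    have hne : ((i : ℤ) + 1) ^ 2 ≠ 0 := by positivity
    apply mul_left_cancel₀ hne
    have lhs1 : ((i : ℤ) + 1) ^ 2 * (sw (i + 1) k * sw j k)
        = ∑ l ∈ range (i + j + 1),
            (((k : ℤ) * (k + 1) - (i : ℤ) * ((i : ℤ) + 1)) * (c3 i j l * sw l k)) := by
      rw [← Finset.mul_sum, ← IH j k]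
      linear_combination (sw j k) * (recur i k).symm
    have split : ∀ l ∈ range (i + j + 1),
        (((k : ℤ) * (k + 1) - (i : ℤ) * ((i : ℤ) + 1)) * (c3 i j l * sw l k))
          = c3 i j l * (((l : ℤ) + 1) ^ 2 * sw (l + 1) k)
            + ((l : ℤ) * ((l : ℤ) + 1) - (i : ℤ) * ((i : ℤ) + 1)) * (c3 i j l * sw l k) := by
      intro l _
      linear_combination (c3 i j l) * (recur l k)
    rw [lhs1, Finset.sum_congr rfl split, Finset.sum_add_distrib]
    -- now the RHS
    rw [show i + 1 + j + 1 = (i + j + 1) + 1 from by omega]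
    rw [Finset.mul_sum, Finset.sum_range_succ' (fun l => ((i : ℤ) + 1) ^ 2 * (c3 (i + 1) j l * sw l k)) (i + j + 1)]
    have stepped : ∀ l ∈ range (i + j + 1),
        ((i : ℤ) + 1) ^ 2 * (c3 (i + 1) j (l + 1) * sw (l + 1) k)
          = c3 i j l * (((l : ℤ) + 1) ^ 2 * sw (l + 1) k)
            + (((l : ℤ) + 1) * (((l : ℤ) + 1) + 1) - (i : ℤ) * ((i : ℤ) + 1)) * (c3 i j (l + 1) * sw (l + 1) k) := by
      intro l _
      linear_combination (sw (l + 1) k) * (key3a i j l)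
    rw [Finset.sum_congr rfl stepped, Finset.sum_add_distrib]
    have f0 : ((i : ℤ) + 1) ^ 2 * (c3 (i + 1) j 0 * sw 0 k)
        = ((0 : ℤ) * ((0 : ℤ) + 1) - (i : ℤ) * ((i : ℤ) + 1)) * (c3 i j 0 * sw 0 k) := by
      linear_combination (sw 0 k) * (key3b i j)
    rw [f0]
    have shift : (∑ l ∈ range (i + j + 1),
          (((l : ℤ) + 1) * (((l : ℤ) + 1) + 1) - (i : ℤ) * ((i : ℤ) + 1)) * (c3 i j (l + 1) * sw (l + 1) k))
          + ((0 : ℤ) * ((0 : ℤ) + 1) - (i : ℤ) * ((i : ℤ) + 1)) * (c3 i j 0 * sw 0 k)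
        = ∑ l ∈ range (i + j + 1 + 1),
            ((l : ℤ) * ((l : ℤ) + 1) - (i : ℤ) * ((i : ℤ) + 1)) * (c3 i j l * sw l k) := by
      rw [Finset.sum_range_succ' (fun l => ((l : ℤ) * ((l : ℤ) + 1) - (i : ℤ) * ((i : ℤ) + 1)) * (c3 i j l * sw l k)) (i + j + 1)]
      push_cast
      ring
    have last0 : c3 i j (i + j + 1) = 0 := by
      unfold c3
      rw [Nat.choose_eq_zero_of_lt (by omega)]
      simp
    have ext : (∑ x ∈ range (i + j + 1),
          ((x : ℤ) * ((x : ℤ) + 1) - (i : ℤ) * ((i : ℤ) + 1)) * (c3 i j x * sw x k))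
        = ∑ x ∈ range (i + j + 1 + 1),
          ((x : ℤ) * ((x : ℤ) + 1) - (i : ℤ) * ((i : ℤ) + 1)) * (c3 i j x * sw x k) := by
      conv_rhs => rw [Finset.sum_range_succ]
      rw [last0]
      ring
    linear_combination ext - shift

def vwc (j l m : ℕ) : ℤ :=
  if m ≤ l + j then
    ((m.choose j : ℕ) : ℤ) * ((((l + j).choose (2 * j) : ℕ) : ℤ) * ((j.choose (l + j - m) : ℕ) : ℤ))
  else 0

lemma I1 (j l m : ℕ) :
    ((l.choose j : ℕ) : ℤ) * c3 j l m = (((2 * j).choose j : ℕ) : ℤ) * vwc j l m := by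
  unfold c3 vwc
  by_cases hm : m ≤ l + j
  · rw [if_pos hm]
    by_cases hj : j ≤ m
    · have c1 := chainN (j + l) m j hj
      rw [show j + l - j = l from by omega] at c1
      have c2 := chainN m l (m - j) (by omega)
      rw [show m - (m - j) = j from by omega, show l - (m - j) = l + j - m from by omega] at c2
      have c2' : m.choose l * l.choose (m - j) = m.choose j * j.choose (l + j - m) := by
        rw [c2, Nat.choose_symm hj]
      have c3' := chainN (l + j) (2 * j) j (by omega)
      rw [show l + j - j = l from by omega, show 2 * j - j = j from by omega] at c3'
      have C1 := congrArg (fun x : ℕ => (x : ℤ)) c1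
      have C2 := congrArg (fun x : ℕ => (x : ℤ)) c2'
      have C3 := congrArg (fun x : ℕ => (x : ℤ)) c3'
      rw [show j + l = l + j from by omega] at C1 ⊢
      push_cast at C1 C2 C3
      linear_combination
        (((l.choose j : ℕ) : ℤ) * ((m.choose l : ℕ) : ℤ)) * C1
        + (((l.choose j : ℕ) : ℤ) * (((l + j).choose j : ℕ) : ℤ)) * C2
        - (((m.choose j : ℕ) : ℤ) * ((j.choose (l + j - m) : ℕ) : ℤ)) * C3
    · push_neg at hj
      rw [Nat.choose_eq_zero_of_lt hj]
      push_cast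
      ring
  · rw [if_neg hm]
    rw [show j + l = l + j from by omega, Nat.choose_eq_zero_of_lt (by omega : l + j < m)]
    push_cast
    ring

lemma VW (j l : ℕ) {M : ℕ} (hM : l + j < M) (k : ℕ) :
    ((l.choose j : ℕ) : ℤ) * ((((k + j).choose (2 * j) : ℕ) : ℤ) * sw l k)
      = ∑ m ∈ range M, vwc j l m * sw m k := by
  have hpos : 0 < (2 * j).choose j := Nat.choose_pos (by omega)
  have hC : (((2 * j).choose j : ℕ) : ℤ) ≠ 0 := by exact_mod_cast hpos.ne'
  apply mul_left_cancel₀ hC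
  have h1 : (((2 * j).choose j : ℕ) : ℤ) * (((l.choose j : ℕ) : ℤ) * ((((k + j).choose (2 * j) : ℕ) : ℤ) * sw l k))
      = ((l.choose j : ℕ) : ℤ) * (sw j k * sw l k) := by
    rw [← swEq j k]; ring
  rw [h1, lemA j l k, Finset.mul_sum, Finset.mul_sum]
  have hsub : range (j + l + 1) ⊆ range M := by
    intro x hx
    rw [mem_range] at hx ⊢
    omega
  calc ∑ m ∈ range (j + l + 1), ((l.choose j : ℕ) : ℤ) * (c3 j l m * sw m k)
      = ∑ m ∈ range (j + l + 1), (((2 * j).choose j : ℕ) : ℤ) * (vwc j l m * sw m k) := by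
        apply Finset.sum_congr rfl
        intro m _
        linear_combination (sw m k) * (I1 j l m)
    _ = ∑ m ∈ range M, (((2 * j).choose j : ℕ) : ℤ) * (vwc j l m * sw m k) := by
        apply Finset.sum_subset hsub
        intro x _ hx'
        have hgt : ¬ x ≤ l + j := by
          intro hle
          exact hx' (mem_range.mpr (by omega))
        unfold vwc
        rw [if_neg hgt]
        ring

lemma Qlem (j s : ℕ) : ∃ b : ℕ → ℤ, ∀ k,
    (((k + j).choose (2 * j) : ℕ) : ℤ) ^ s * sw j k
      = ∑ l ∈ range (s * j + j + 1), ((l.choose j : ℕ) : ℤ) * b l * sw l k := by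
  induction s with
  | zero =>
    refine ⟨fun l => if l = j then 1 else 0, fun k => ?_⟩
    rw [pow_zero, one_mul]
    rw [Finset.sum_eq_single j]
    · simp
    · intro l _ hlj
      simp [hlj]
    · intro h
      exact absurd (mem_range.mpr (by omega)) h
  | succ s IH =>
    obtain ⟨b, hb⟩ := IH
    refine ⟨fun m => ∑ l ∈ range (s * j + j + 1),
      b l * (if m ≤ l + j then (((l + j).choose (2 * j) : ℕ) : ℤ) * ((j.choose (l + j - m) : ℕ) : ℤ) else 0),
      fun k => ?_⟩
    have e1 : (((k + j).choose (2 * j) : ℕ) : ℤ) ^ (s + 1) * sw j k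
        = (((k + j).choose (2 * j) : ℕ) : ℤ) * ((((k + j).choose (2 * j) : ℕ) : ℤ) ^ s * sw j k) := by
      ring
    rw [e1, hb k, Finset.mul_sum]
    have hstep : ∀ l ∈ range (s * j + j + 1),
        (((k + j).choose (2 * j) : ℕ) : ℤ) * (((l.choose j : ℕ) : ℤ) * b l * sw l k)
          = ∑ m ∈ range ((s + 1) * j + j + 1), b l * (vwc j l m * sw m k) := by
      intro l hl
      have hlj : l + j < (s + 1) * j + j + 1 := by
        rw [mem_range] at hl
        have : (s + 1) * j = s * j + j := by ring
        omega
      rw [← Finset.mul_sum, ← VW j l hlj k]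
      ring
    rw [Finset.sum_congr rfl hstep, Finset.sum_comm]
    apply Finset.sum_congr rfl
    intro m _
    show _ = (m.choose j : ℤ) * (∑ l ∈ range (s * j + j + 1),
        b l * if m ≤ l + j then (((l + j).choose (2 * j) : ℕ) : ℤ) * ((j.choose (l + j - m) : ℕ) : ℤ) else 0) * sw m k
    rw [Finset.mul_sum, Finset.sum_mul]
    apply Finset.sum_congr rfl
    intro l _
    unfold vwc
    split <;> ring

/-- the span of the `sw l`. -/
def Msub : Submodule ℤ (ℕ → ℤ) := Submodule.span ℤ (Set.range (fun l => sw l))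

lemma memM_of_sum (N : ℕ) (c : ℕ → ℤ) :
    (fun k => ∑ l ∈ range N, c l * sw l k) ∈ Msub := by
  have : (fun k => ∑ l ∈ range N, c l * sw l k) = ∑ l ∈ range N, c l • (sw l) := by
    funext k
    rw [Finset.sum_apply]
    simp
  rw [this]
  exact sum_mem (fun l _ => Submodule.smul_mem _ _ (Submodule.subset_span ⟨l, rfl⟩))

lemma mulM {f g : ℕ → ℤ} (hf : f ∈ Msub) (hg : g ∈ Msub) : f * g ∈ Msub := by
  have key : ∀ i : ℕ, ∀ g ∈ Msub, (sw i) * g ∈ Msub := by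
    intro i g hg
    induction hg using Submodule.span_induction with
    | mem x hx =>
      obtain ⟨j, rfl⟩ := hx
      have : (sw i) * (sw j) = fun k => ∑ l ∈ range (i + j + 1), c3 i j l * sw l k := by
        funext k
        exact lemA i j k
      rw [this]
      exact memM_of_sum _ _
    | zero => rw [mul_zero]; exact zero_mem _
    | add x y _ _ hx hy => rw [mul_add]; exact add_mem hx hy
    | smul a x _ hx => rw [mul_smul_comm]; exact Submodule.smul_mem _ _ hx
  induction hf using Submodule.span_induction with
  | mem x hx =>
    obtain ⟨i, rfl⟩ := hx
    exact key i g hg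
  | zero => rw [zero_mul]; exact zero_mem _
  | add x y _ _ hx hy => rw [add_mul]; exact add_mem hx hy
  | smul a x _ hx => rw [smul_mul_assoc]; exact Submodule.smul_mem _ _ hx

lemma gMem (r : ℕ) (hr : 0 < r) (j : ℕ) :
    (fun k => (((k + j).choose (2 * j) : ℕ) : ℤ) ^ r * (((2 * j).choose j : ℕ) : ℤ)) ∈ Msub := by
  obtain ⟨s, rfl⟩ : ∃ s, r = s + 1 := ⟨r - 1, by omega⟩
  obtain ⟨b, hb⟩ := Qlem j s
  have : (fun k => (((k + j).choose (2 * j) : ℕ) : ℤ) ^ (s + 1) * (((2 * j).choose j : ℕ) : ℤ))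
      = fun k => ∑ l ∈ range (s * j + j + 1), (((l.choose j : ℕ) : ℤ) * b l) * sw l k := by
    funext k
    have h2 : (((k + j).choose (2 * j) : ℕ) : ℤ) ^ (s + 1) * (((2 * j).choose j : ℕ) : ℤ)
        = (((k + j).choose (2 * j) : ℕ) : ℤ) ^ s * sw j k := by
      rw [← swEq j k]; ring
    rw [h2, hb k]
  rw [this]
  exact memM_of_sum _ _

lemma lsum (l n : ℕ) :
    ∑ k ∈ range (n + 1), ((-1 : ℤ) ^ k * (2 * (k : ℤ) + 1)) * sw l k
      = (-1) ^ n * ((n : ℤ) + 1) * (((n + 1 + l).choose l : ℕ) : ℤ) * ((n.choose l : ℕ) : ℤ) := by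
  induction n with
  | zero =>
    rw [Finset.sum_range_one]
    unfold sw
    rcases l with _ | l
    · simp
    · simp [Nat.choose_zero_succ]
  | succ n IH =>
    rw [Finset.sum_range_succ, IH]
    have u1N : (n + 1 + 1 + l) * ((n + 1 + l).choose l) = ((n + 1 + 1 + l).choose l) * (n + 1 + 1) := by
      have h := Nat.add_one_mul_choose_eq (n + 1 + l) (n + 1)
      rw [Nat.choose_symm_add] at h
      rw [show n + 1 + l + 1 = n + 1 + 1 + l from by omega] at h
      rw [Nat.choose_symm_add] at h
      exact h
    have u1 := congrArg (fun x : ℕ => (x : ℤ)) u1N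
    push_cast at u1
    have u2 := abs2 n l
    have hsw : sw l (n + 1) = (((n + 1 + l).choose l : ℕ) : ℤ) * (((n + 1).choose l : ℕ) : ℤ) := rfl
    rw [hsw]
    push_cast
    rw [pow_succ]
    linear_combination (-((-1:ℤ) ^ n * (((n + 1 + l).choose l : ℕ) : ℤ))) * u2
      - ((-1:ℤ) ^ n * (((n + 1).choose l : ℕ) : ℤ)) * u1

lemma dvdlem (n : ℕ) {f : ℕ → ℤ} (hf : f ∈ Msub) :
    (n : ℤ) ∣ ∑ k ∈ range n, ((-1 : ℤ) ^ k * (2 * (k : ℤ) + 1)) * f k := by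
  induction hf using Submodule.span_induction with
  | mem x hx =>
    obtain ⟨l, rfl⟩ := hx
    rcases n with _ | a
    · simp
    · rw [show ∑ k ∈ range (a + 1), ((-1 : ℤ) ^ k * (2 * (k : ℤ) + 1)) * (sw l) k
          = ∑ k ∈ range (a + 1), ((-1 : ℤ) ^ k * (2 * (k : ℤ) + 1)) * sw l k from rfl, lsum l a]
      refine ⟨(-1) ^ a * (((a + 1 + l).choose l : ℕ) : ℤ) * ((a.choose l : ℕ) : ℤ), ?_⟩
      push_cast
      ring
  | zero => simp
  | add x y _ _ hx hy =>
    have : ∑ k ∈ range n, ((-1 : ℤ) ^ k * (2 * (k : ℤ) + 1)) * (x + y) k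
        = (∑ k ∈ range n, ((-1 : ℤ) ^ k * (2 * (k : ℤ) + 1)) * x k)
          + ∑ k ∈ range n, ((-1 : ℤ) ^ k * (2 * (k : ℤ) + 1)) * y k := by
      rw [← Finset.sum_add_distrib]
      apply Finset.sum_congr rfl
      intro k _
      simp [mul_add]
    rw [this]
    exact dvd_add hx hy
  | smul a x _ hx =>
    have : ∑ k ∈ range n, ((-1 : ℤ) ^ k * (2 * (k : ℤ) + 1)) * (a • x) k
        = a * ∑ k ∈ range n, ((-1 : ℤ) ^ k * (2 * (k : ℤ) + 1)) * x k := by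
      rw [Finset.mul_sum]
      apply Finset.sum_congr rfl
      intro k _
      simp
      ring
    rw [this]
    exact Dvd.dvd.mul_left hx a

lemma coeff_schmidt_single (r : ℕ) (hr : 0 < r) (j k : ℕ) :
    MvPolynomial.coeff (Finsupp.single j 1) (schmidtMv r k)
      = (((k + j).choose (2 * j) : ℕ) : ℤ) ^ r * (((2 * j).choose j : ℕ) : ℤ) := by
  unfold schmidtMv
  rw [MvPolynomial.coeff_sum]
  have hterm : ∀ i ∈ range (k + 1),
      MvPolynomial.coeff (Finsupp.single j 1)
        (MvPolynomial.C ((((k + i).choose (2 * i)) ^ r * ((2 * i).choose i) : ℕ) : ℤ) *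
          MvPolynomial.X i)
        = if i = j then ((((k + j).choose (2 * j)) ^ r * ((2 * j).choose j) : ℕ) : ℤ) else 0 := by
    intro i _
    rw [MvPolynomial.coeff_C_mul, MvPolynomial.coeff_X']
    by_cases h : i = j
    · subst h
      simp
    · rw [if_neg (fun he => h ((Finsupp.single_left_inj (one_ne_zero)).mp he)), if_neg h, mul_zero]
  rw [Finset.sum_congr rfl hterm, Finset.sum_ite_eq' (range (k + 1)) j]
  by_cases hj : j ∈ range (k + 1)
  · rw [if_pos hj]
    push_cast
    ring
  · rw [if_neg hj]
    have h0 : (k + j).choose (2 * j) = 0 := by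
      apply Nat.choose_eq_zero_of_lt
      rw [mem_range] at hj
      omega
    rw [h0]
    push_cast
    rw [zero_pow (by omega : r ≠ 0)]
    ring

lemma coeff_schmidt_nonsingle (r : ℕ) (e : ℕ →₀ ℕ) (he : ∀ j : ℕ, e ≠ Finsupp.single j 1)
    (k : ℕ) : MvPolynomial.coeff e (schmidtMv r k) = 0 := by
  unfold schmidtMv
  rw [MvPolynomial.coeff_sum]
  apply Finset.sum_eq_zero
  intro i _
  rw [MvPolynomial.coeff_C_mul, MvPolynomial.coeff_X', if_neg (fun h => he i h.symm), mul_zero]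

lemma memM_coeff (r : ℕ) (hr : 0 < r) :
    ∀ (m : ℕ) (d : ℕ →₀ ℕ), (fun k => MvPolynomial.coeff d ((schmidtMv r k) ^ m)) ∈ Msub := by
  intro m
  induction m with
  | zero =>
    intro d
    simp only [pow_zero, MvPolynomial.coeff_one]
    by_cases hd : (0 : ℕ →₀ ℕ) = d
    · simp only [if_pos hd]
      have : (fun _ : ℕ => (1 : ℤ)) = sw 0 := by
        funext k
        unfold sw
        simp
      rw [this]
      exact Submodule.subset_span ⟨0, rfl⟩
    · simp only [if_neg hd]
      exact zero_mem _
  | succ m IH =>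
    intro d
    have hsplit : (fun k => MvPolynomial.coeff d ((schmidtMv r k) ^ (m + 1)))
        = ∑ x ∈ Finset.HasAntidiagonal.antidiagonal d,
            (fun k => MvPolynomial.coeff x.1 ((schmidtMv r k) ^ m)) *
              (fun k => MvPolynomial.coeff x.2 (schmidtMv r k)) := by
      funext k
      rw [Finset.sum_apply]
      rw [pow_succ, MvPolynomial.coeff_mul]
      apply Finset.sum_congr rfl
      intro x _
      rfl
    rw [hsplit]
    apply sum_mem
    intro x _
    apply mulM (IH x.1)
    by_cases hx : ∃ j, x.2 = Finsupp.single j 1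
    · obtain ⟨j, hj⟩ := hx
      have : (fun k => MvPolynomial.coeff x.2 (schmidtMv r k))
          = fun k => (((k + j).choose (2 * j) : ℕ) : ℤ) ^ r * (((2 * j).choose j : ℕ) : ℤ) := by
        funext k
        rw [hj, coeff_schmidt_single r hr j k]
      rw [this]
      exact gMem r hr j
    · push_neg at hx
      have : (fun k => MvPolynomial.coeff x.2 (schmidtMv r k)) = 0 := by
        funext k
        exact coeff_schmidt_nonsingle r x.2 hx k
      rw [this]
      exact zero_mem _

/-- For any positive integers `r`, `m`, `n`, every coefficient of
`∑_{k=0}^{n-1} (−1)^k (2k+1) · S_k^{(r)}(x_0,…,x_k)^m` is divisible by `n`. -/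
theorem sum_schmidtMv_pow_alt_dvd (r m n : ℕ) (hr : 0 < r) (hm : 0 < m) (hn : 0 < n) :
    ∀ d : ℕ →₀ ℕ,
      (n : ℤ) ∣ MvPolynomial.coeff d
        (∑ k ∈ Finset.range n, ((-1 : ℤ) ^ k * (2 * (k : ℤ) + 1)) • (schmidtMv r k) ^ m) := by
  intro d
  rw [MvPolynomial.coeff_sum]
  have hc : ∀ k ∈ range n,
      MvPolynomial.coeff d (((-1 : ℤ) ^ k * (2 * (k : ℤ) + 1)) • (schmidtMv r k) ^ m)
        = ((-1 : ℤ) ^ k * (2 * (k : ℤ) + 1)) * MvPolynomial.coeff d ((schmidtMv r k) ^ m) := by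
    intro k _
    rw [MvPolynomial.coeff_smul, smul_eq_mul]
  rw [Finset.sum_congr rfl hc]
  exact dvdlem n (memM_coeff r hr m d)
end

section
/- For any positive integers r, m, n, every coefficient of the one-variable polynomial ∑_{k=0}^{n-1} (−1)^k (2k+1) · S_k^{(r)}(x)^m is divisible by n, where S_n^{(r)}(x) := ∑_{k=0}^{n} C(n,k)^r · C(n+k,k)^r · x^k. -/
open Finset

/-- `Q i k = C(k,i) * C(k+i,i)` as an integer. -/
def QQ (i k : ℕ) : ℤ := (k.choose i : ℤ) * ((k + i).choose i : ℤ)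

/-- Linearization coefficients for products `Q a * Q b`. -/
def cc (a b i : ℕ) : ℤ := (i.choose a : ℤ) * (i.choose b : ℤ) * ((a + b).choose i : ℤ)

lemma intA (x i : ℕ) : ((x : ℤ) - i) * (x.choose i : ℤ) = (i + 1) * (x.choose (i+1) : ℤ) := by
  rcases le_or_gt i x with h | h
  · have := Nat.choose_succ_right_eq x i
    have h2 : ((x.choose (i+1) * (i+1) : ℕ) : ℤ) = ((x.choose i * (x - i) : ℕ) : ℤ) := by
      exact_mod_cast this
    push_cast [Nat.cast_sub h] at h2
    linarith
  · rw [Nat.choose_eq_zero_of_lt h, Nat.choose_eq_zero_of_lt (by omega)]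
    ring

lemma intB (x i : ℕ) : ((x : ℤ) + i + 1) * ((x + i).choose i : ℤ)
    = (i + 1) * ((x + i + 1).choose (i+1) : ℤ) := by
  have := Nat.add_one_mul_choose_eq (x + i) i
  have h2 : (((x+i).succ * (x+i).choose i : ℕ) : ℤ)
      = (((x+i+1).choose (i+1) * (i+1) : ℕ) : ℤ) := by exact_mod_cast this
  push_cast at h2
  linarith

/-- `(x+1-a) C(x+1,a) = (x+1) C(x,a)` over ℤ. -/
lemma intC (x a : ℕ) : ((x : ℤ) + 1 - a) * ((x+1).choose a : ℤ) = (x + 1) * (x.choose a : ℤ) := by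
  have h1 := intA (x+1) a
  have h2 := Nat.add_one_mul_choose_eq x a
  have h2' : (((x+1) * x.choose a : ℕ) : ℤ) = (((x+1).choose (a+1) * (a+1) : ℕ) : ℤ) := by
    exact_mod_cast h2
  push_cast at h1 h2' ⊢
  linarith

/-- `n * C(n-1, i) = (n - i) * C(n, i)` over ℤ. -/
lemma intD (n i : ℕ) : (n : ℤ) * ((n - 1).choose i : ℤ) = ((n : ℤ) - i) * (n.choose i : ℤ) := by
  cases n with
  | zero =>
    simp only [Nat.cast_zero, zero_mul, zero_sub, Nat.choose]
    rcases Nat.eq_zero_or_pos i with rfl | hi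
    · simp
    · rw [Nat.choose_eq_zero_of_lt hi]; ring
  | succ m =>
    have := intC m i
    simp only [Nat.add_sub_cancel]
    push_cast at this ⊢
    linarith

/-- three-term recurrence: `(x-i)(x+i+1) Q i x = (i+1)^2 Q (i+1) x`. -/
lemma L1 (i x : ℕ) :
    ((x : ℤ) - i) * ((x : ℤ) + i + 1) * QQ i x = ((i : ℤ) + 1)^2 * QQ (i+1) x := by
  have h1 := intA x i
  have h2 := intB x i
  unfold QQ
  have e : x + (i + 1) = x + i + 1 := by ring
  rw [e]
  linear_combination (((x:ℤ) + i + 1) * ((x + i).choose i : ℤ)) * h1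
    + (((i:ℤ) + 1) * (x.choose (i+1) : ℤ)) * h2

/-- coefficient recurrence for the linearization coefficients. -/
lemma E3 (a b i : ℕ) :
    ((b : ℤ) + 1)^2 * cc a (b+1) (i+1)
      = cc a b i * ((i : ℤ) + 1)^2
        + cc a b (i+1) * (((i:ℤ)+1) * ((i:ℤ)+2) - (b:ℤ) * ((b:ℤ)+1)) := by
  have h1 := intA (i+1) b
  have h2 : ((a+b+1).choose (i+1) : ℤ) = ((a+b).choose (i+1) : ℤ) + ((a+b).choose i : ℤ) := by
    rw [Nat.choose_succ_succ (a+b) i]; push_cast; ring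
  have h3 := intA (a+b) i
  have h4 := intC i a
  have h5 := intC i b
  unfold cc
  have e : a + (b+1) = a + b + 1 := by ring
  rw [e]
  push_cast at h1 h3 h4 h5
  linear_combination (-((b:ℤ)+1) * ((i+1).choose a : ℤ) * ((a+b+1).choose (i+1) : ℤ)) * h1
    + (((i:ℤ)+1-b) * ((b:ℤ)+1) * ((i+1).choose a : ℤ) * ((i+1).choose b : ℤ)) * h2
    + (((i:ℤ)+1-b) * ((i+1).choose a : ℤ) * ((i+1).choose b : ℤ)) * h3
    + (((i:ℤ)+1-b) * ((i+1).choose b : ℤ) * ((a+b).choose i : ℤ)) * h4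
    + (((i:ℤ)+1) * (i.choose a : ℤ) * ((a+b).choose i : ℤ)) * h5

/-- Linearization: `Q a · Q b = ∑ c_{a,b,i} Q i`. -/
lemma lin (a x : ℕ) : ∀ b, QQ a x * QQ b x = ∑ i ∈ range (a+b+1), cc a b i * QQ i x := by
  intro b
  induction b with
  | zero =>
    have h0 : QQ 0 x = 1 := by unfold QQ; simp
    rw [Finset.sum_range_succ]
    have hz : ∑ i ∈ range a, cc a 0 i * QQ i x = 0 := by
      apply Finset.sum_eq_zero
      intro i hi
      have : i.choose a = 0 := Nat.choose_eq_zero_of_lt (by simpa using (mem_range.mp hi))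
      unfold cc; rw [this]; push_cast; ring
    rw [hz, h0]
    have hcc : cc a 0 a = 1 := by unfold cc; simp
    rw [hcc]; ring
  | succ b ih =>
    have hcan : ((b:ℤ)+1)^2 ≠ 0 := by positivity
    apply mul_left_cancel₀ hcan
    have key : ((b:ℤ)+1)^2 * (QQ a x * QQ (b+1) x)
        = ∑ i ∈ range (a+b+1),
            (cc a b i * (((i:ℤ)+1)^2 * QQ (i+1) x)
              + cc a b i * ((((i:ℤ))*((i:ℤ)+1) - (b:ℤ)*((b:ℤ)+1)) * QQ i x)) := by
      have hmul : ((b:ℤ)+1)^2 * (QQ a x * QQ (b+1) x)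
          = ((x:ℤ) - b) * ((x:ℤ) + b + 1) * (QQ a x * QQ b x) := by
        linear_combination (-(QQ a x)) * (L1 b x)
      rw [hmul, ih, Finset.mul_sum]
      apply Finset.sum_congr rfl
      intro i _
      have := L1 i x
      linear_combination (cc a b i) * this
    rw [key]
    -- now reorganize RHS
    rw [Finset.sum_add_distrib]
    -- second sum: shift of index
    have hshift : ∑ i ∈ range (a+b+1),
          cc a b i * ((((i:ℤ))*((i:ℤ)+1) - (b:ℤ)*((b:ℤ)+1)) * QQ i x)
        = ∑ i ∈ range (a+b+1),
          cc a b (i+1) * ((((i:ℤ)+1)*((i:ℤ)+2) - (b:ℤ)*((b:ℤ)+1)) * QQ (i+1) x) := by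
      set g : ℕ → ℤ := fun i => cc a b i * ((((i:ℤ))*((i:ℤ)+1) - (b:ℤ)*((b:ℤ)+1)) * QQ i x)
        with hg
      have hg0 : g 0 = 0 := by
        rcases Nat.eq_zero_or_pos b with rfl | hb
        · simp [hg]
        · have : (0 : ℕ).choose b = 0 := Nat.choose_eq_zero_of_lt hb
          simp [hg, cc, this]
      have hgtop : g (a+b+1) = 0 := by
        have : (a+b).choose (a+b+1) = 0 := Nat.choose_eq_zero_of_lt (by omega)
        simp [hg, cc, this]
      have h1 : ∑ i ∈ range (a+b+2), g i = ∑ i ∈ range (a+b+1), g (i+1) + g 0 :=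
        Finset.sum_range_succ' g (a+b+1)
      have h2 : ∑ i ∈ range (a+b+2), g i = ∑ i ∈ range (a+b+1), g i + g (a+b+1) :=
        Finset.sum_range_succ g (a+b+1)
      have : ∑ i ∈ range (a+b+1), g i = ∑ i ∈ range (a+b+1), g (i+1) := by
        rw [hg0] at h1; rw [hgtop] at h2; linarith
      rw [this]
      apply Finset.sum_congr rfl
      intro i _
      simp only [hg]
      push_cast
      ring
    rw [hshift, ← Finset.sum_add_distrib]
    -- RHS target
    have hz0 : ((b:ℤ)+1)^2 * (cc a (b+1) 0 * QQ 0 x) = 0 := by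
      have : (0:ℕ).choose (b+1) = 0 := Nat.choose_eq_zero_of_lt (by omega)
      simp [cc, this]
    have hrhs : ((b:ℤ)+1)^2 * ∑ i ∈ range (a+(b+1)+1), cc a (b+1) i * QQ i x
        = ∑ i ∈ range (a+b+1), ((b:ℤ)+1)^2 * (cc a (b+1) (i+1) * QQ (i+1) x) := by
      have e2 : a + (b+1) + 1 = (a+b+1) + 1 := by ring
      rw [e2, Finset.mul_sum, Finset.sum_range_succ', hz0, add_zero]
    rw [hrhs]
    apply Finset.sum_congr rfl
    intro i _
    have := E3 a b i
    linear_combination (-(QQ (i+1) x)) * this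

/-- Key closed form for the alternating sum. -/
lemma keysum (i : ℕ) : ∀ n : ℕ, ∑ k ∈ range n, (-1:ℤ)^k * (2*(k:ℤ)+1) * QQ i k
    = (-1:ℤ)^(n+1) * n * ((n+i).choose i : ℤ) * ((n-1).choose i : ℤ) := by
  intro n
  induction n with
  | zero => simp
  | succ n ih =>
    rw [Finset.sum_range_succ, ih]
    have hD := intD n i
    -- (n+1) * C(n+i+1, i) = (n+i+1) * C(n+i, i)
    have hB : ((n:ℤ)+1) * ((n+i+1).choose i : ℤ) = ((n:ℤ)+(i:ℤ)+1) * ((n+i).choose i : ℤ) := by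
      have h1 := Nat.add_one_mul_choose_eq (n+i) n
      have hs1 : (n+i).choose n = (n+i).choose i := by
        have := Nat.choose_symm (show n ≤ n + i by omega)
        simpa [Nat.add_sub_cancel_left] using this.symm
      have hs2 : (n+i+1).choose (n+1) = (n+i+1).choose i := by
        have := Nat.choose_symm (show i ≤ n + i + 1 by omega)
        have e : n + i + 1 - i = n + 1 := by omega
        rw [e] at this
        exact this
      rw [hs1, hs2] at h1
      have h1' : (((n+i+1) * (n+i).choose i : ℕ) : ℤ)
          = (((n+i+1).choose i * (n+1) : ℕ) : ℤ) := by exact_mod_cast h1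
      push_cast at h1'
      linarith
    have hsucc : (n + 1) - 1 = n := by omega
    rw [hsucc]
    have e : n + 1 + i = n + i + 1 := by omega
    rw [e]
    unfold QQ
    have hsign : (-1:ℤ)^(n+1+1) = (-1:ℤ)^n := by rw [pow_succ, pow_succ]; ring
    have hsign2 : (-1:ℤ)^(n+1) = -(-1:ℤ)^n := by rw [pow_succ]; ring
    rw [hsign, hsign2]
    push_cast
    linear_combination (-(-1:ℤ)^n * ((n+i).choose i : ℤ)) * hD
      + (-(-1:ℤ)^n * (n.choose i : ℤ)) * hB

/-- The ℤ-span of the `Q i`, as an inductive predicate. -/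
inductive SpanQ : (ℕ → ℤ) → Prop where
  | basic (i : ℕ) : SpanQ (fun k => QQ i k)
  | zero : SpanQ (fun _ => 0)
  | add {f g : ℕ → ℤ} : SpanQ f → SpanQ g → SpanQ (fun k => f k + g k)
  | smul (c : ℤ) {f : ℕ → ℤ} : SpanQ f → SpanQ (fun k => c * f k)

lemma spanQ_sum {ι : Type*} (s : Finset ι) (g : ι → ℕ → ℤ) (h : ∀ j ∈ s, SpanQ (g j)) :
    SpanQ (fun k => ∑ j ∈ s, g j k) := by
  classical
  induction s using Finset.induction_on with
  | empty => simpa using SpanQ.zero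
  | insert x s hx ih =>
    simp only [Finset.sum_insert hx]
    exact SpanQ.add (h x (Finset.mem_insert_self x s))
      (ih (fun j hj => h j (Finset.mem_insert_of_mem hj)))

lemma spanQ_mul_basic (i : ℕ) {g : ℕ → ℤ} (hg : SpanQ g) :
    SpanQ (fun k => QQ i k * g k) := by
  induction hg with
  | basic j =>
    have hfe : (fun k => QQ i k * QQ j k)
        = fun k => ∑ l ∈ range (i+j+1), cc i j l * QQ l k :=
      funext fun k => lin i k j
    rw [hfe]
    exact spanQ_sum _ _ (fun l _ => SpanQ.smul _ (SpanQ.basic l))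
  | zero => simpa using SpanQ.zero
  | add hf hg ihf ihg => simp only [mul_add]; exact SpanQ.add ihf ihg
  | smul c hf ihf =>
    simp only [mul_left_comm]
    exact SpanQ.smul c ihf

lemma spanQ_mul {f g : ℕ → ℤ} (hf : SpanQ f) (hg : SpanQ g) :
    SpanQ (fun k => f k * g k) := by
  induction hf with
  | basic i => exact spanQ_mul_basic i hg
  | zero => simpa using SpanQ.zero
  | add h1 h2 ih1 ih2 => simp only [add_mul]; exact SpanQ.add ih1 ih2
  | smul c h ih => simp only [mul_assoc]; exact SpanQ.smul c ih

lemma spanQ_one : SpanQ (fun _ => (1:ℤ)) := by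
  have : (fun (_ : ℕ) => (1:ℤ)) = fun k => QQ 0 k := by
    funext k; unfold QQ; simp
  rw [this]; exact SpanQ.basic 0

lemma spanQ_pow {f : ℕ → ℤ} (hf : SpanQ f) (r : ℕ) : SpanQ (fun k => f k ^ r) := by
  induction r with
  | zero => simp only [pow_zero]; exact spanQ_one
  | succ r ih => simp only [pow_succ]; exact spanQ_mul ih hf

lemma spanQ_dvd {f : ℕ → ℤ} (hf : SpanQ f) (n : ℕ) :
    (n:ℤ) ∣ ∑ k ∈ range n, (-1:ℤ)^k * (2*(k:ℤ)+1) * f k := by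
  induction hf with
  | basic i =>
    rw [keysum i n]
    exact ⟨(-1:ℤ)^(n+1) * ((n+i).choose i : ℤ) * ((n-1).choose i : ℤ), by ring⟩
  | zero => simp
  | add h1 h2 ih1 ih2 =>
    rename_i f g
    have he : ∑ k ∈ range n, (-1:ℤ)^k * (2*(k:ℤ)+1) * (f k + g k)
        = (∑ k ∈ range n, (-1:ℤ)^k * (2*(k:ℤ)+1) * f k)
          + ∑ k ∈ range n, (-1:ℤ)^k * (2*(k:ℤ)+1) * g k := by
      rw [← Finset.sum_add_distrib]
      exact Finset.sum_congr rfl (fun k _ => by ring)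
    rw [he]
    exact dvd_add ih1 ih2
  | smul c h ih =>
    rename_i f
    have he : ∑ k ∈ range n, (-1:ℤ)^k * (2*(k:ℤ)+1) * (c * f k)
        = c * ∑ k ∈ range n, (-1:ℤ)^k * (2*(k:ℤ)+1) * f k := by
      rw [Finset.mul_sum]
      exact Finset.sum_congr rfl (fun k _ => by ring)
    rw [he]
    exact ih.mul_left c

/-- The one-variable Schmidt polynomial
`S_n^{(r)}(x) := ∑_{k=0}^{n} C(n,k)^r · C(n+k,k)^r · x^k`. -/
noncomputable def schmidtPoly (r n : ℕ) : Polynomial ℤ :=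
  ∑ k ∈ Finset.range (n + 1),
    Polynomial.C (((n.choose k) ^ r * ((n + k).choose k) ^ r : ℕ) : ℤ) * Polynomial.X ^ k

lemma schmidt_coeff (r k d : ℕ) (hr : 0 < r) :
    (schmidtPoly r k).coeff d = (QQ d k) ^ r := by
  unfold schmidtPoly
  rw [Polynomial.finset_sum_coeff]
  simp only [Polynomial.coeff_C_mul, Polynomial.coeff_X_pow, mul_ite, mul_one, mul_zero]
  rw [Finset.sum_ite_eq (range (k+1)) d]
  by_cases hd : d ∈ range (k+1)
  · rw [if_pos hd]
    unfold QQ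
    push_cast
    rw [mul_pow]
  · rw [if_neg hd]
    have hlt : k < d := by simpa using hd
    have h0 : k.choose d = 0 := Nat.choose_eq_zero_of_lt hlt
    unfold QQ
    rw [h0]
    push_cast
    rw [zero_mul, zero_pow hr.ne']

lemma span_coeff (r : ℕ) (hr : 0 < r) (m : ℕ) :
    ∀ d, SpanQ (fun k => ((schmidtPoly r k) ^ m).coeff d) := by
  induction m with
  | zero =>
    intro d
    simp only [pow_zero, Polynomial.coeff_one]
    by_cases hd : d = 0
    · subst hd; simpa using spanQ_one
    · rw [if_neg hd]
      exact SpanQ.zero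
  | succ m ih =>
    intro d
    simp only [pow_succ, Polynomial.coeff_mul]
    apply spanQ_sum
    intro p _
    have h2 : (fun k => ((schmidtPoly r k) ^ m).coeff p.1 * (schmidtPoly r k).coeff p.2)
        = fun k => ((schmidtPoly r k) ^ m).coeff p.1 * (QQ p.2 k) ^ r :=
      funext fun k => by rw [schmidt_coeff r k p.2 hr]
    rw [h2]
    exact spanQ_mul (ih p.1) (spanQ_pow (SpanQ.basic p.2) r)

/-- For any positive integers `r`, `m`, `n`, every coefficient of
`∑_{k=0}^{n-1} (−1)^k (2k+1) · S_k^{(r)}(x)^m` is divisible by `n`. -/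
theorem sum_schmidtPoly_pow_alt_dvd (r m n : ℕ) (hr : 0 < r) (hm : 0 < m) (hn : 0 < n) :
    ∀ d : ℕ,
      (n : ℤ) ∣ (∑ k ∈ Finset.range n,
        ((-1 : ℤ) ^ k * (2 * (k : ℤ) + 1)) • (schmidtPoly r k) ^ m).coeff d := by
  intro d
  rw [Polynomial.finset_sum_coeff]
  have he : ∀ k : ℕ, (((-1 : ℤ) ^ k * (2 * (k : ℤ) + 1)) • (schmidtPoly r k) ^ m).coeff d
      = (-1:ℤ)^k * (2*(k:ℤ)+1) * ((schmidtPoly r k) ^ m).coeff d := by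
    intro k
    rw [Polynomial.coeff_smul, smul_eq_mul]
  simp only [he]
  exact spanQ_dvd (span_coeff r hr m d) n
end

section
/- For every positive integer r and every nonnegative integer m, there exist integers b_{m,k}^{(r)} for m ≤ k ≤ rm such that C(k,m) divides b_{m,k}^{(r)} for each k, and for every nonnegative integer ℓ one has C(ℓ+m, 2m)^r · C(2m, m) = ∑_{k=m}^{rm} b_{m,k}^{(r)} · C(ℓ+k, 2k) · C(2k, k). -/
open Finset

/-- `G ℓ j = C(ℓ+j, 2j) * C(2j, j)` as an integer. -/
private def GG (ℓ j : ℕ) : ℤ := ((ℓ + j).choose (2 * j) : ℤ) * ((2 * j).choose j : ℤ)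

private lemma zchoose_succ (n m : ℕ) :
    ((m : ℤ) + 1) * (n.choose (m + 1) : ℤ) = ((n : ℤ) - m) * (n.choose m : ℤ) := by
  rcases le_or_gt m n with h | h
  · have h2 : ((n.choose (m + 1) * (m + 1) : ℕ) : ℤ) = ((n.choose m * (n - m) : ℕ) : ℤ) := by
      exact_mod_cast congrArg (Nat.cast : ℕ → ℤ) (Nat.choose_succ_right_eq n m)
    push_cast [Nat.cast_sub h] at h2
    linarith
  · rw [Nat.choose_eq_zero_of_lt h, Nat.choose_eq_zero_of_lt (by omega)]
    push_cast; ring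

private lemma zchoose_up (n m : ℕ) :
    ((n : ℤ) + 1) * (n.choose m : ℤ) = ((n : ℤ) + 1 - m) * ((n + 1).choose m : ℤ) := by
  have h1 : ((n + 1 : ℕ) : ℤ) * (n.choose m : ℤ) = ((n + 1).choose (m + 1) : ℤ) * ((m : ℤ) + 1) := by
    exact_mod_cast congrArg (Nat.cast : ℕ → ℤ) (Nat.add_one_mul_choose_eq n m)
  have h2 := zchoose_succ (n + 1) m
  push_cast at h1 h2 ⊢
  linear_combination h1 + h2

/-- `(2j+1)(2j+2) C(ℓ+j+1, 2j+2) = (ℓ-j)(ℓ+j+1) C(ℓ+j, 2j)` over ℤ. -/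
private lemma zlem3 (ℓ j : ℕ) :
    ((2 * j : ℤ) + 1) * (2 * j + 2) * (((ℓ + j + 1).choose (2 * j + 2) : ℕ) : ℤ) =
      ((ℓ : ℤ) - j) * ((ℓ : ℤ) + j + 1) * ((ℓ + j).choose (2 * j) : ℤ) := by
  have h1 := zchoose_succ (ℓ + j + 1) (2 * j + 1)
  rw [show 2 * j + 1 + 1 = 2 * j + 2 from rfl] at h1
  have h2 : ((ℓ + j + 1 : ℕ) : ℤ) * ((ℓ + j).choose (2 * j) : ℤ) =
      ((ℓ + j + 1).choose (2 * j + 1) : ℤ) * ((2 * j : ℤ) + 1) := by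
    exact_mod_cast congrArg (Nat.cast : ℕ → ℤ) (Nat.add_one_mul_choose_eq (ℓ + j) (2 * j))
  push_cast at h1 h2 ⊢
  linear_combination (2 * (j : ℤ) + 1) * h1 - ((ℓ : ℤ) - j) * h2

/-- `(j+1)^2 C(2j+2, j+1) = (2j+1)(2j+2) C(2j, j)` over ℤ. -/
private lemma zlem4 (j : ℕ) :
    ((j : ℤ) + 1) ^ 2 * ((2 * j + 2).choose (j + 1) : ℤ) =
      ((2 * j : ℤ) + 1) * (2 * j + 2) * ((2 * j).choose j : ℤ) := by
  have hs : (2 * j + 1).choose (j + 1) = (2 * j + 1).choose j := by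
    rw [show j + 1 = 2 * j + 1 - j by omega, Nat.choose_symm (by omega)]
  have h1 : ((2 * j + 1 : ℕ) : ℤ) * ((2 * j).choose j : ℤ) =
      ((2 * j + 1).choose (j + 1) : ℤ) * ((j : ℤ) + 1) := by
    exact_mod_cast congrArg (Nat.cast : ℕ → ℤ) (Nat.add_one_mul_choose_eq (2 * j) j)
  have h2 : ((2 * j + 2 : ℕ) : ℤ) * ((2 * j + 1).choose j : ℤ) =
      ((2 * j + 2).choose (j + 1) : ℤ) * ((j : ℤ) + 1) := by
    exact_mod_cast congrArg (Nat.cast : ℕ → ℤ) (Nat.add_one_mul_choose_eq (2 * j + 1) j)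
  rw [hs] at h1
  push_cast at h1 h2 ⊢
  linear_combination -((j : ℤ) + 1) * h2 - (2 * (j : ℤ) + 2) * h1

/-- The key contiguous relation: `(j+1)^2 G(ℓ, j+1) = (ℓ-j)(ℓ+j+1) G(ℓ, j)`. -/
private lemma keyG (ℓ j : ℕ) :
    ((j : ℤ) + 1) ^ 2 * GG ℓ (j + 1) = ((ℓ : ℤ) - j) * ((ℓ : ℤ) + j + 1) * GG ℓ j := by
  have hM : ((2 * j : ℤ) + 1) * (2 * j + 2) ≠ 0 := by positivity
  apply mul_left_cancel₀ hM
  have h3 := zlem3 ℓ j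
  have h4 := zlem4 j
  show ((2 * j : ℤ) + 1) * (2 * j + 2) * (((j : ℤ) + 1) ^ 2 *
      (((ℓ + (j + 1)).choose (2 * (j + 1)) : ℤ) * ((2 * (j + 1)).choose (j + 1) : ℤ))) = _
  rw [show ℓ + (j + 1) = ℓ + j + 1 from rfl, show 2 * (j + 1) = 2 * j + 2 from rfl]
  show _ = ((2 * j : ℤ) + 1) * (2 * j + 2) * (((ℓ : ℤ) - j) * ((ℓ : ℤ) + j + 1) *
      (((ℓ + j).choose (2 * j) : ℤ) * ((2 * j).choose j : ℤ)))
  linear_combination ((j : ℤ) + 1) ^ 2 * ((2 * j + 2).choose (j + 1) : ℤ) * h3 +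
    ((ℓ : ℤ) - j) * ((ℓ : ℤ) + j + 1) * ((ℓ + j).choose (2 * j) : ℤ) * h4

/-- Termwise identity, index `i+1`. -/
private lemma TW1 (m k i : ℕ) :
    ((m : ℤ) + 1) * ((k : ℤ) + m + 1) * ((k + i + 1).choose (m + 1) : ℤ) * ((m + 1).choose (i + 1) : ℤ) =
      ((k : ℤ) + i + 1) ^ 2 * ((k + i).choose m : ℤ) * (m.choose i : ℤ) +
        (((k : ℤ) + i + 1) * ((k : ℤ) + i + 2) - (m : ℤ) * ((m : ℤ) + 1)) *
          ((k + i + 1).choose m : ℤ) * (m.choose (i + 1) : ℤ) := by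
  have ha := zchoose_succ (k + i + 1) m
  have hb : ((m + 1).choose (i + 1) : ℤ) = (m.choose i : ℤ) + (m.choose (i + 1) : ℤ) := by
    exact_mod_cast congrArg (Nat.cast : ℕ → ℤ) (Nat.choose_succ_succ m i)
  have hc := zchoose_up (k + i) m
  have hd := zchoose_succ m i
  push_cast at ha hb hc hd ⊢
  linear_combination ((k : ℤ) + m + 1) * ((m + 1).choose (i + 1) : ℤ) * ha +
    ((k : ℤ) + m + 1) * ((k : ℤ) + i + 1 - m) * ((k + i + 1).choose m : ℤ) * hb -
    ((k : ℤ) + i + 1) * (m.choose i : ℤ) * hc -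
    (((k : ℤ) + i + 1) - m) * ((k + i + 1).choose m : ℤ) * hd

/-- Termwise identity, index `0`. -/
private lemma TW0 (m k : ℕ) :
    ((m : ℤ) + 1) * ((k : ℤ) + m + 1) * (k.choose (m + 1) : ℤ) =
      ((k : ℤ) * ((k : ℤ) + 1) - (m : ℤ) * ((m : ℤ) + 1)) * (k.choose m : ℤ) := by
  have h := zchoose_succ k m
  linear_combination ((k : ℤ) + m + 1) * h

private lemma keySum (m k ℓ : ℕ) :
    ((m : ℤ) + 1) * ((k : ℤ) + m + 1) *
        ∑ i ∈ range (m + 2), ((k + i).choose (m + 1) : ℤ) * ((m + 1).choose i : ℤ) * GG ℓ (k + i) =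
      ((ℓ : ℤ) - m) * ((ℓ : ℤ) + m + 1) *
        ∑ i ∈ range (m + 1), ((k + i).choose m : ℤ) * (m.choose i : ℤ) * GG ℓ (k + i) := by
  set u : ℕ → ℤ := fun i =>
    ((k + i).choose m : ℤ) * (m.choose i : ℤ) * ((k : ℤ) + i + 1) ^ 2 * GG ℓ (k + i + 1) with hu
  set v : ℕ → ℤ := fun i =>
    ((k + i).choose m : ℤ) * (m.choose i : ℤ) *
      (((k : ℤ) + i) * ((k : ℤ) + i + 1) - (m : ℤ) * ((m : ℤ) + 1)) * GG ℓ (k + i) with hv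
  set w : ℕ → ℤ := fun i =>
    ((m : ℤ) + 1) * ((k : ℤ) + m + 1) *
      ((k + i).choose (m + 1) : ℤ) * ((m + 1).choose i : ℤ) * GG ℓ (k + i) with hw
  have e1 : ((m : ℤ) + 1) * ((k : ℤ) + m + 1) *
      ∑ i ∈ range (m + 2), ((k + i).choose (m + 1) : ℤ) * ((m + 1).choose i : ℤ) * GG ℓ (k + i) =
      ∑ i ∈ range (m + 2), w i := by
    rw [Finset.mul_sum]; exact sum_congr rfl fun i _ => by rw [hw]; ring
  have e3 : ∀ i, w (i + 1) = u i + v (i + 1) := by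
    intro i
    have h := TW1 m k i
    simp only [hu, hv, hw, show k + (i + 1) = k + i + 1 by omega]
    push_cast
    linear_combination GG ℓ (k + i + 1) * h
  have e4 : w 0 = v 0 := by
    have h := TW0 m k
    simp only [hu, hv, hw, Nat.choose_zero_right, Nat.add_zero]
    linear_combination GG ℓ k * h
  have e5 : v (m + 1) = 0 := by
    simp only [hv, Nat.choose_succ_self]
    push_cast; ring
  have e6 : ∀ i, ((ℓ : ℤ) - m) * ((ℓ : ℤ) + m + 1) *
      (((k + i).choose m : ℤ) * (m.choose i : ℤ) * GG ℓ (k + i)) = u i + v i := by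
    intro i
    have h := keyG ℓ (k + i)
    push_cast at h
    simp only [hu, hv]
    linear_combination (-(((k + i).choose m : ℤ) * (m.choose i : ℤ))) * h
  calc ((m : ℤ) + 1) * ((k : ℤ) + m + 1) *
      ∑ i ∈ range (m + 2), ((k + i).choose (m + 1) : ℤ) * ((m + 1).choose i : ℤ) * GG ℓ (k + i)
      = ∑ i ∈ range (m + 2), w i := e1
    _ = ∑ i ∈ range (m + 1), w (i + 1) + w 0 := Finset.sum_range_succ' w (m + 1)
    _ = ∑ i ∈ range (m + 1), (u i + v (i + 1)) + v 0 := by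
        rw [e4]; congr 1; exact sum_congr rfl fun i _ => e3 i
    _ = (∑ i ∈ range (m + 1), u i) + ((∑ i ∈ range (m + 1), v (i + 1)) + v 0) := by
        rw [Finset.sum_add_distrib]; ring
    _ = (∑ i ∈ range (m + 1), u i) + ∑ i ∈ range (m + 2), v i := by
        rw [Finset.sum_range_succ' v (m + 1)]
    _ = (∑ i ∈ range (m + 1), u i) + ((∑ i ∈ range (m + 1), v i) + v (m + 1)) := by
        rw [Finset.sum_range_succ v (m + 1)]
    _ = ∑ i ∈ range (m + 1), (u i + v i) := by rw [e5, Finset.sum_add_distrib]; ring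
    _ = ∑ i ∈ range (m + 1), ((ℓ : ℤ) - m) * ((ℓ : ℤ) + m + 1) *
          (((k + i).choose m : ℤ) * (m.choose i : ℤ) * GG ℓ (k + i)) :=
        (sum_congr rfl fun i _ => (e6 i).symm)
    _ = ((ℓ : ℤ) - m) * ((ℓ : ℤ) + m + 1) *
          ∑ i ∈ range (m + 1), ((k + i).choose m : ℤ) * (m.choose i : ℤ) * GG ℓ (k + i) := by
        rw [Finset.mul_sum]

private lemma star (m k ℓ : ℕ) :
    ((k + m).choose (2 * m) : ℤ) *
        ∑ i ∈ range (m + 1), ((k + i).choose m : ℤ) * (m.choose i : ℤ) * GG ℓ (k + i) =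
      (k.choose m : ℤ) * ((ℓ + m).choose (2 * m) : ℤ) * GG ℓ k := by
  induction m with
  | zero => simp [GG]
  | succ m ih =>
    have hM : (((m : ℤ) + 1) * ((2 * (m : ℤ) + 1) * (2 * (m : ℤ) + 2))) ≠ 0 := by positivity
    apply mul_left_cancel₀ hM
    have hL1 := zlem3 k m
    have hR1 := zlem3 ℓ m
    have hR2 := zchoose_succ k m
    have hKS := keySum m k ℓ
    show (((m : ℤ) + 1) * ((2 * (m : ℤ) + 1) * (2 * (m : ℤ) + 2))) *
        (((k + m + 1).choose (2 * m + 2) : ℤ) *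
          ∑ i ∈ range (m + 2), ((k + i).choose (m + 1) : ℤ) * ((m + 1).choose i : ℤ) * GG ℓ (k + i)) =
      (((m : ℤ) + 1) * ((2 * (m : ℤ) + 1) * (2 * (m : ℤ) + 2))) *
        ((k.choose (m + 1) : ℤ) * (((ℓ + m + 1).choose (2 * m + 2)) : ℤ) * GG ℓ k)
    push_cast at hL1 hR1 ⊢
    linear_combination
      (((m : ℤ) + 1) *
          (∑ i ∈ range (m + 2), ((k + i).choose (m + 1) : ℤ) * ((m + 1).choose i : ℤ) * GG ℓ (k + i))) * hL1 +
      (((k : ℤ) - m) * ((k + m).choose (2 * m) : ℤ)) * hKS +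
      (((k : ℤ) - m) * ((ℓ : ℤ) - m) * ((ℓ : ℤ) + m + 1)) * ih -
      ((2 * (m : ℤ) + 1) * (2 * (m : ℤ) + 2) * ((ℓ + m + 1).choose (2 * m + 2) : ℤ) * GG ℓ k) * hR2 -
      (((k : ℤ) - m) * (k.choose m : ℤ) * GG ℓ k) * hR1

private lemma sum_shift (F : ℕ → ℤ) (k mm lo hi : ℕ) (h1 : lo ≤ k) (h2 : k + mm ≤ hi) :
    ∑ i ∈ range (mm + 1), F (k + i) =
      ∑ j ∈ Icc lo hi, if k ≤ j ∧ j ≤ k + mm then F j else 0 := by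
  rw [← Finset.sum_filter]
  have hset : Finset.filter (fun j => k ≤ j ∧ j ≤ k + mm) (Icc lo hi) = Icc k (k + mm) := by
    ext j; simp only [Finset.mem_filter, Finset.mem_Icc]; omega
  rw [hset, ← Finset.Ico_add_one_right_eq_Icc, Finset.sum_Ico_eq_sum_range,
    show k + mm + 1 - k = mm + 1 by omega]


/-- For every positive integer `r` and nonnegative integer `m`, there exist integers
`b k` for `m ≤ k ≤ r·m`, each divisible by `C(k,m)`, such that for every `ℓ`,
`C(ℓ+m,2m)^r · C(2m,m) = ∑_{k=m}^{rm} b k · C(ℓ+k,2k) · C(2k,k)`. -/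
theorem schmidt_lemma_one (r m : ℕ) (hr : 0 < r) :
    ∃ b : ℕ → ℤ,
      (∀ k, m ≤ k → k ≤ r * m → ((k.choose m : ℤ)) ∣ b k) ∧
      ∀ ℓ : ℕ,
        (((ℓ + m).choose (2 * m) : ℤ)) ^ r * ((2 * m).choose m : ℤ) =
          ∑ k ∈ Finset.Icc m (r * m),
            b k * ((ℓ + k).choose (2 * k) : ℤ) * ((2 * k).choose k : ℤ) := by
  induction r with
  | zero => omega
  | succ n ih =>
    rcases Nat.eq_zero_or_pos n with h0 | hn
    · subst h0
      refine ⟨fun k => if k = m then 1 else 0, ?_, ?_⟩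
      · intro k hk1 hk2
        have : k = m := by omega
        subst this
        simp
      · intro ℓ
        rw [show 1 * m = m by omega, Finset.Icc_self, Finset.sum_singleton]
        simp [GG]
    · obtain ⟨b, hdvd, hsum⟩ := ih hn
      set a : ℕ → ℤ := fun k => b k / (k.choose m : ℤ) with ha
      refine ⟨fun j => (j.choose m : ℤ) *
        ∑ k ∈ Icc m (n * m), a k * ((k + m).choose (2 * m) : ℤ) *
          (if k ≤ j ∧ j ≤ k + m then (m.choose (j - k) : ℤ) else 0), ?_, ?_⟩
      · intro j _ _
        exact Dvd.intro _ rfl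
      · intro ℓ
        have hmul : ∀ k, m ≤ k → k ≤ n * m → (k.choose m : ℤ) * a k = b k := by
          intro k h1 h2
          rw [ha]
          exact Int.mul_ediv_cancel' (hdvd k h1 h2)
        have step1 : (((ℓ + m).choose (2 * m) : ℤ)) ^ (n + 1) * ((2 * m).choose m : ℤ) =
            ((ℓ + m).choose (2 * m) : ℤ) *
              ∑ k ∈ Finset.Icc m (n * m),
                b k * ((ℓ + k).choose (2 * k) : ℤ) * ((2 * k).choose k : ℤ) := by
          rw [← hsum ℓ]; ring
        rw [step1, Finset.mul_sum]
        have perk : ∀ k ∈ Icc m (n * m),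
            ((ℓ + m).choose (2 * m) : ℤ) * (b k * ((ℓ + k).choose (2 * k) : ℤ) * ((2 * k).choose k : ℤ)) =
            ∑ j ∈ Icc m ((n + 1) * m),
              (a k * ((k + m).choose (2 * m) : ℤ) *
                (if k ≤ j ∧ j ≤ k + m then (m.choose (j - k) : ℤ) else 0)) *
                ((j.choose m : ℤ) * GG ℓ j) := by
          intro k hk
          rw [Finset.mem_Icc] at hk
          have hb : (k.choose m : ℤ) * a k = b k := hmul k hk.1 hk.2
          have hstar := star m k ℓ
          have hsh := sum_shift (fun j => (j.choose m : ℤ) * (m.choose (j - k) : ℤ) * GG ℓ j)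
            k m m ((n + 1) * m) hk.1 (by nlinarith [hk.2])
          simp only [show ∀ i, k + i - k = i from fun i => by omega] at hsh
          calc ((ℓ + m).choose (2 * m) : ℤ) *
                (b k * ((ℓ + k).choose (2 * k) : ℤ) * ((2 * k).choose k : ℤ))
              = a k * ((k.choose m : ℤ) * ((ℓ + m).choose (2 * m) : ℤ) * GG ℓ k) := by
                rw [GG, ← hb]; ring
            _ = a k * (((k + m).choose (2 * m) : ℤ) *
                  ∑ i ∈ range (m + 1), ((k + i).choose m : ℤ) * (m.choose i : ℤ) * GG ℓ (k + i)) := by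
                rw [hstar]
            _ = a k * (((k + m).choose (2 * m) : ℤ) *
                  ∑ j ∈ Icc m ((n + 1) * m),
                    if k ≤ j ∧ j ≤ k + m then (j.choose m : ℤ) * (m.choose (j - k) : ℤ) * GG ℓ j else 0) := by
                rw [hsh]
            _ = ∑ j ∈ Icc m ((n + 1) * m),
                  (a k * ((k + m).choose (2 * m) : ℤ) *
                    (if k ≤ j ∧ j ≤ k + m then (m.choose (j - k) : ℤ) else 0)) *
                    ((j.choose m : ℤ) * GG ℓ j) := by
                rw [Finset.mul_sum, Finset.mul_sum]
                refine sum_congr rfl fun j _ => ?_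
                split_ifs <;> ring
        rw [Finset.sum_congr rfl perk, Finset.sum_comm]
        refine sum_congr rfl fun j _ => ?_
        rw [← Finset.sum_mul]
        rw [GG]
        ring
end

section
/- For all nonnegative integers ℓ, m, k with ℓ ≥ m, one has the Pfaff–Saalschütz identity C(ℓ+m, m+k) · C(ℓ+k, k) = ∑_{i=0}^{k} C(ℓ−m, i) · C(m, m+i−k) · C(ℓ+m+i, ℓ). -/
/-- Integer-indexed binomial coefficient: zero outside `0 ≤ b ≤ a`. -/
def Bz (a b : ℤ) : ℕ := if 0 ≤ b ∧ b ≤ a then a.toNat.choose b.toNat else 0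

lemma Bz_natCast (a b : ℕ) : Bz a b = a.choose b := by
  unfold Bz
  split_ifs with h
  · simp
  · have : a < b := by omega
    simp [Nat.choose_eq_zero_of_lt this]

lemma Bz_zero_of_neg {a b : ℤ} (hb : b < 0) : Bz a b = 0 := by
  unfold Bz; rw [if_neg (by omega)]

lemma Bz_zero_of_lt {a b : ℤ} (hab : a < b) : Bz a b = 0 := by
  unfold Bz; rw [if_neg (by omega)]

lemma Bz_symm {a : ℤ} (ha : 0 ≤ a) (b : ℤ) : Bz a b = Bz a (a - b) := by
  unfold Bz
  split_ifs with h1 h2 h2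
  · have hb : b.toNat ≤ a.toNat := by omega
    have : (a - b).toNat = a.toNat - b.toNat := by omega
    rw [this, Nat.choose_symm hb]
  · omega
  · omega
  · rfl

lemma Bz_trinomial (a b c : ℤ) : Bz a b * Bz b c = Bz a c * Bz (a - c) (b - c) := by
  by_cases h : 0 ≤ c ∧ c ≤ b ∧ b ≤ a
  · obtain ⟨h1, h2, h3⟩ := h
    unfold Bz
    rw [if_pos ⟨by omega, h3⟩, if_pos ⟨h1, h2⟩, if_pos ⟨h1, by omega⟩,
      if_pos ⟨by omega, by omega⟩]
    have e1 : b.toNat ≤ a.toNat := by omega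
    have e2 : c.toNat ≤ b.toNat := by omega
    have e3 : (a - c).toNat = a.toNat - c.toNat := by omega
    have e4 : (b - c).toNat = b.toNat - c.toNat := by omega
    rw [e3, e4]
    exact Nat.choose_mul e2
  · have L : Bz a b * Bz b c = 0 := by
      unfold Bz
      split_ifs with h1 h2 h2 <;> first | (exfalso; omega) | simp
    have R : Bz a c * Bz (a - c) (b - c) = 0 := by
      unfold Bz
      split_ifs with h1 h2 h2 <;> first | (exfalso; omega) | simp
    rw [L, R]

lemma sum_range_ext (f : ℕ → ℕ) (N1 N2 : ℕ) (h1 : ∀ x, N1 ≤ x → f x = 0)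
    (h2 : ∀ x, N2 ≤ x → f x = 0) :
    ∑ x ∈ Finset.range N1, f x = ∑ x ∈ Finset.range N2, f x := by
  have H : ∀ N M : ℕ, N ≤ M → (∀ x, N ≤ x → f x = 0) →
      ∑ x ∈ Finset.range M, f x = ∑ x ∈ Finset.range N, f x := by
    intro N M hNM hf
    symm
    apply Finset.sum_subset (Finset.range_subset_range.2 hNM)
    intro x _ hx
    exact hf x (by simpa using hx)
  rw [← H N1 (max N1 N2) (le_max_left _ _) h1]
  exact H N2 (max N1 N2) (le_max_right _ _) h2

/-- Vandermonde's identity for `Bz`. -/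
lemma Bz_vandermonde (a b : ℕ) (z : ℤ) :
    ∑ x ∈ Finset.range (a + 1), a.choose x * Bz b (z - x) = Bz (a + b : ℕ) z := by
  rcases lt_or_ge z 0 with hz | hz
  · rw [Bz_zero_of_neg hz]
    apply Finset.sum_eq_zero
    intro x _
    rw [Bz_zero_of_neg (by omega), mul_zero]
  · obtain ⟨t, rfl⟩ : ∃ t : ℕ, z = t := ⟨z.toNat, by omega⟩
    have hBz : ∀ x : ℕ, Bz b ((t : ℤ) - x) = if x ≤ t then b.choose (t - x) else 0 := by
      intro x
      rcases le_or_gt x t with hx | hx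
      · rw [if_pos hx]
        have e : (t : ℤ) - x = ((t - x : ℕ) : ℤ) := by omega
        rw [e, Bz_natCast]
      · rw [if_neg (by omega), Bz_zero_of_neg (by omega)]
    calc ∑ x ∈ Finset.range (a + 1), a.choose x * Bz b ((t : ℤ) - x)
        = ∑ x ∈ Finset.range (t + 1), a.choose x * Bz b ((t : ℤ) - x) := by
          apply sum_range_ext
          · intro x hx; rw [Nat.choose_eq_zero_of_lt (by omega), zero_mul]
          · intro x hx; rw [hBz, if_neg (by omega), mul_zero]
      _ = ∑ x ∈ Finset.range (t + 1), a.choose x * b.choose (t - x) := by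
          refine Finset.sum_congr rfl fun x hx => ?_
          rw [hBz, if_pos (by simpa [Nat.lt_succ_iff] using hx)]
      _ = (a + b).choose t := by
          rw [Nat.add_choose_eq, Finset.Nat.sum_antidiagonal_eq_sum_range_succ_mk]
      _ = Bz (a + b : ℕ) t := (Bz_natCast _ _).symm

/-- The Pfaff–Saalschütz identity: for nonnegative integers `ℓ, m, k` with `m ≤ ℓ`,
`C(ℓ+m, m+k) · C(ℓ+k, k) = ∑_{i=0}^{k} C(ℓ−m, i) · C(m, m+i−k) · C(ℓ+m+i, ℓ)`,
where a binomial coefficient with negative lower index is interpreted as `0`. -/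
theorem pfaff_saalschutz (ℓ m k : ℕ) (h : m ≤ ℓ) :
    (ℓ + m).choose (m + k) * (ℓ + k).choose k =
      ∑ i ∈ Finset.range (k + 1),
        (ℓ - m).choose i * (if k ≤ m + i then m.choose (m + i - k) else 0) *
          (ℓ + m + i).choose ℓ := by
  set n := ℓ - m with hn
  have hnZ : (n : ℤ) = (ℓ : ℤ) - m := by omega
  -- rewrite the guard as a Bz
  have guard_eq : ∀ i : ℕ,
      (if k ≤ m + i then m.choose (m + i - k) else 0) = Bz m ((m : ℤ) + i - k) := by
    intro i
    rcases le_or_gt k (m + i) with hki | hki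
    · rw [if_pos hki]
      have e : (m : ℤ) + i - k = ((m + i - k : ℕ) : ℤ) := by omega
      rw [e, Bz_natCast]
    · rw [if_neg (by omega), Bz_zero_of_neg (by omega)]
  -- Step 1: expand the last factor by Vandermonde
  have key1 : ∀ i : ℕ,
      Bz m ((m : ℤ) + i - k) * (ℓ + m + i).choose ℓ =
        ∑ j ∈ Finset.range (ℓ + k + 1),
          (ℓ + k).choose j * (Bz m ((m : ℤ) + i - k) * Bz ((m : ℤ) + i - k) ((ℓ : ℤ) - j)) := by
    intro i
    rcases lt_or_ge ((m : ℤ) + i - k) 0 with hc | hc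
    · rw [Bz_zero_of_neg hc]
      simp
    · obtain ⟨c, hceq⟩ : ∃ c : ℕ, (m : ℤ) + i - k = (c : ℤ) :=
        ⟨((m : ℤ) + i - k).toNat, by omega⟩
      rw [hceq]
      have hlmi : ℓ + k + c = ℓ + m + i := by omega
      have hv := Bz_vandermonde (ℓ + k) c (ℓ : ℤ)
      rw [hlmi] at hv
      have hch : (ℓ + m + i).choose ℓ = Bz ((ℓ + m + i : ℕ) : ℤ) ℓ := (Bz_natCast _ _).symm
      rw [hch, ← hv, Finset.mul_sum]
      refine Finset.sum_congr rfl fun j _ => ?_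
      ring
  -- Step 3 (inner Vandermonde after trinomial rewriting)
  have key2 : ∀ j : ℕ,
      Bz m ((ℓ : ℤ) - j) *
          ∑ i ∈ Finset.range (k + 1),
            n.choose i * Bz ((j : ℤ) - n) ((j : ℤ) - n - k + i) =
        Bz m ((ℓ : ℤ) - j) * Bz j ((j : ℤ) - k) := by
    intro j
    rcases lt_or_ge j n with hj | hj
    · rw [Bz_zero_of_lt (by omega : (m : ℤ) < (ℓ : ℤ) - j), zero_mul, zero_mul]
    · obtain ⟨b, rfl⟩ : ∃ b : ℕ, j = n + b := ⟨j - n, by omega⟩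
      congr 1
      have eb : ((n + b : ℕ) : ℤ) - n = (b : ℤ) := by push_cast; ring
      calc ∑ i ∈ Finset.range (k + 1),
              n.choose i * Bz (((n + b : ℕ) : ℤ) - n) (((n + b : ℕ) : ℤ) - n - k + i)
          = ∑ i ∈ Finset.range (k + 1), b.choose i * Bz n ((k : ℤ) - i) := by
            rw [← Finset.sum_range_reflect]
            refine Finset.sum_congr rfl fun i hi => ?_
            have hik : i ≤ k := by simpa [Nat.lt_succ_iff] using hi
            have e1 : k + 1 - 1 - i = k - i := by omega
            rw [e1, eb]
            have e2 : (b : ℤ) - k + (k - i : ℕ) = (b : ℤ) - i := by omega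
            rw [e2]
            have e3 : Bz b ((b : ℤ) - i) = b.choose i := by
              rw [← Bz_symm (by positivity) (i : ℤ), Bz_natCast]
            have e4 : (n.choose (k - i) : ℕ) = Bz n ((k : ℤ) - i) := by
              have : (k : ℤ) - i = ((k - i : ℕ) : ℤ) := by omega
              rw [this, Bz_natCast]
            rw [e3, e4, mul_comm]
          _ = ∑ i ∈ Finset.range (b + 1), b.choose i * Bz n ((k : ℤ) - i) := by
            apply sum_range_ext
            · intro x hx; rw [Bz_zero_of_neg (by omega), mul_zero]
            · intro x hx; rw [Nat.choose_eq_zero_of_lt (by omega), zero_mul]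
          _ = Bz (b + n : ℕ) k := Bz_vandermonde b n (k : ℤ)
          _ = Bz ((n + b : ℕ) : ℤ) (((n + b : ℕ) : ℤ) - k) := by
            rw [← Bz_symm (by positivity) (k : ℤ)]
            congr 1
            push_cast; ring
  -- Now the chain of computations
  symm
  calc ∑ i ∈ Finset.range (k + 1),
          (ℓ - m).choose i * (if k ≤ m + i then m.choose (m + i - k) else 0) *
            (ℓ + m + i).choose ℓ
      = ∑ i ∈ Finset.range (k + 1),
          n.choose i * (Bz m ((m : ℤ) + i - k) * (ℓ + m + i).choose ℓ) := by
        refine Finset.sum_congr rfl fun i _ => ?_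
        rw [guard_eq, ← hn, mul_assoc]
    _ = ∑ i ∈ Finset.range (k + 1), ∑ j ∈ Finset.range (ℓ + k + 1),
          n.choose i *
            ((ℓ + k).choose j *
              (Bz m ((m : ℤ) + i - k) * Bz ((m : ℤ) + i - k) ((ℓ : ℤ) - j))) := by
        refine Finset.sum_congr rfl fun i _ => ?_
        rw [key1, Finset.mul_sum]
    _ = ∑ j ∈ Finset.range (ℓ + k + 1), ∑ i ∈ Finset.range (k + 1),
          (ℓ + k).choose j *
            (Bz m ((ℓ : ℤ) - j) * (n.choose i * Bz ((j : ℤ) - n) ((j : ℤ) - n - k + i))) := by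
        rw [Finset.sum_comm]
        refine Finset.sum_congr rfl fun j _ => Finset.sum_congr rfl fun i _ => ?_
        rw [Bz_trinomial ((m : ℤ)) ((m : ℤ) + i - k) ((ℓ : ℤ) - j)]
        have e1 : (m : ℤ) - ((ℓ : ℤ) - j) = (j : ℤ) - n := by omega
        have e2 : (m : ℤ) + i - k - ((ℓ : ℤ) - j) = (j : ℤ) - n - k + i := by omega
        rw [e1, e2]
        ring
    _ = ∑ j ∈ Finset.range (ℓ + k + 1),
          (ℓ + k).choose j * (Bz m ((ℓ : ℤ) - j) * Bz j ((j : ℤ) - k)) := by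
        refine Finset.sum_congr rfl fun j _ => ?_
        rw [← Finset.mul_sum, ← Finset.mul_sum, key2]
    _ = ∑ j ∈ Finset.range (ℓ + k + 1),
          (ℓ + k).choose k * (Bz ℓ ((j : ℤ) - k) * Bz m ((ℓ : ℤ) - j)) := by
        refine Finset.sum_congr rfl fun j _ => ?_
        have e0 : ((ℓ + k).choose j : ℕ) = Bz (ℓ + k : ℕ) j := (Bz_natCast _ _).symm
        have e1 : Bz j ((j : ℤ) - k) = Bz j k := (Bz_symm (by positivity) (k : ℤ)).symm
        rw [e0, e1, mul_left_comm, Bz_trinomial ((ℓ + k : ℕ) : ℤ) (j : ℤ) (k : ℤ)]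
        have e2 : ((ℓ + k : ℕ) : ℤ) - k = (ℓ : ℤ) := by push_cast; ring
        rw [e2, Bz_natCast]
        ring
    _ = (ℓ + k).choose k *
          ∑ j ∈ Finset.range (ℓ + k + 1), Bz ℓ ((j : ℤ) - k) * Bz m ((ℓ : ℤ) - j) := by
        rw [Finset.mul_sum]
    _ = (ℓ + k).choose k *
          ∑ j ∈ Finset.Ico k (ℓ + k + 1), Bz ℓ ((j : ℤ) - k) * Bz m ((ℓ : ℤ) - j) := by
        congr 1
        symm
        apply Finset.sum_subset
        · rw [Finset.range_eq_Ico]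
          exact Finset.Ico_subset_Ico (Nat.zero_le _) le_rfl
        · intro x _ hx
          have : x < k := by
            rcases Finset.mem_Ico.not.1 hx with h'
            simp only [Finset.mem_range] at *
            omega
          rw [Bz_zero_of_neg (by omega), zero_mul]
    _ = (ℓ + k).choose k *
          ∑ x ∈ Finset.range (ℓ + 1), ℓ.choose x * Bz m ((ℓ : ℤ) - k - x) := by
        congr 1
        rw [Finset.sum_Ico_eq_sum_range]
        have e : ℓ + k + 1 - k = ℓ + 1 := by omega
        rw [e]
        refine Finset.sum_congr rfl fun x _ => ?_
        have e1 : ((k + x : ℕ) : ℤ) - k = (x : ℤ) := by push_cast; ring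
        have e2 : (ℓ : ℤ) - ((k + x : ℕ) : ℤ) = (ℓ : ℤ) - k - x := by push_cast; ring
        rw [e1, e2, Bz_natCast]
    _ = (ℓ + k).choose k * Bz (ℓ + m : ℕ) ((ℓ : ℤ) - k) := by
        rw [Bz_vandermonde ℓ m ((ℓ : ℤ) - k)]
    _ = (ℓ + m).choose (m + k) * (ℓ + k).choose k := by
        have e : Bz (ℓ + m : ℕ) ((ℓ : ℤ) - k) = (ℓ + m).choose (m + k) := by
          have e1 : ((ℓ + m : ℕ) : ℤ) - ((m + k : ℕ) : ℤ) = (ℓ : ℤ) - k := by push_cast; ring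
          rw [← e1, ← Bz_symm (by positivity) (((m + k : ℕ)) : ℤ), Bz_natCast]
        rw [e, mul_comm]
end

section
/- For all nonnegative integers ℓ, m, k with ℓ ≥ m, one has C(ℓ+k, 2k) · C(2k, k) · C(ℓ+m, 2m) · C(2m, m) = ∑_{i=0}^{k} ((m+k)! · i!)/((m+i)! · k!) · C(m, k−i) · C(ℓ−m, i) · C(ℓ+m+i, i) · C(ℓ+m, 2m) · C(2m, m); equivalently, C(ℓ+k, 2k) · C(2k, k) = ∑_{i=0}^{k} ((m+k)! · i!)/((m+i)! · k!) · C(m, k−i) · C(ℓ−m, i) · C(ℓ+m+i, i). -/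
open Nat Finset in
private lemma fcs_aux (x : ℕ) : ((x+1)! : ℚ) = ((x:ℚ)+1) * (x ! : ℚ) := by
  rw [Nat.factorial_succ]; push_cast; ring

set_option maxHeartbeats 1000000 in
set_option maxRecDepth 100000 in
open Nat Finset in
private lemma core_aux (m : ℕ) : ∀ n k : ℕ,
    (k ! : ℚ) * ((m+n+k).choose k : ℚ) * ((m+n).choose k : ℚ)
    = ∑ i ∈ Finset.range (k+1),
        (i ! : ℚ) * ((k-i)! : ℚ) * ((m+k).choose (k-i) : ℚ) * (m.choose (k-i) : ℚ)
          * (n.choose i : ℚ) * ((2*m+n+i).choose i : ℚ) := by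
  induction m with
  | zero =>
    intro n k
    rw [Finset.sum_eq_single k]
    · simp [Nat.sub_self]
      ring
    · intro i hi hne
      have : (Nat.choose 0 (k-i) : ℚ) = 0 := by
        rw [Nat.choose_eq_zero_of_lt]; · simp
        · simp at hi; omega
      rw [this]; ring
    · intro hk; simp at hk
  | succ m ih =>
    intro n k
    have base := ih (n+1) k
    rw [show m+1+n+k = m+(n+1)+k by ring, show m+1+n = m+(n+1) by ring, base]
    have e1 : ∀ i : ℕ, 2*m+(n+1)+i = 2*m+n+1+i := by omega
    have e2 : ∀ i : ℕ, 2*(m+1)+n+i = 2*m+n+2+i := by omega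
    simp only [e1, e2]
    set a1 : ℕ → ℚ := fun i => (i ! : ℚ) * ((k-i)! : ℚ) * (((m+1)+k).choose (k-i) : ℚ)
        * ((m+1).choose (k-i) : ℚ) * (n.choose i : ℚ) * ((2*m+n+2+i).choose i : ℚ) with ha1
    set a2 : ℕ → ℚ := fun i => (i ! : ℚ) * ((k-i)! : ℚ) * ((m+k).choose (k-i) : ℚ)
        * (m.choose (k-i) : ℚ) * ((n+1).choose i : ℚ) * ((2*m+n+1+i).choose i : ℚ) with ha2
    set g : ℕ → ℚ := fun j => if j ≤ k then
        ((j : ℚ)*(2*(m:ℚ)+1+j))/(((n:ℚ)+1)*(2*(m:ℚ)+(n:ℚ)+2)) * a2 j else 0 with hg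
    have key : ∀ i ∈ Finset.range (k+1), a1 i - a2 i = g (i+1) - g i := by
      intro i hi
      rw [Finset.mem_range] at hi
      have hik : i ≤ k := by omega
      rw [ha1, ha2] at *
      rw [hg]
      simp only []
      rcases lt_trichotomy i (n+1) with hin | hin | hin
      · have hin' : i ≤ n := by omega
        rcases lt_trichotomy (k - i) (m+1) with hj | hj | hj
        · rcases Nat.lt_or_ge i k with hik' | hik'
          · obtain ⟨p, rfl⟩ : ∃ p, n = i + p := ⟨n - i, by omega⟩
            obtain ⟨t, rfl⟩ : ∃ t, k = i + (t+1) := ⟨k - i - 1, by omega⟩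
            obtain ⟨q, rfl⟩ : ∃ q, m = (t+1) + q := ⟨m - (t+1), by omega⟩
            rw [if_pos (by omega : i+1 ≤ i+(t+1)), if_pos (by omega : i ≤ i+(t+1))]
            simp only [show i+(t+1) - i = t+1 by omega, show i+(t+1) - (i+1) = t by omega]
            have n1 : (i ! : ℚ) ≠ 0 := Nat.cast_ne_zero.mpr (Nat.factorial_ne_zero _)
            have n2 : (p ! : ℚ) ≠ 0 := Nat.cast_ne_zero.mpr (Nat.factorial_ne_zero _)
            have n3 : (q ! : ℚ) ≠ 0 := Nat.cast_ne_zero.mpr (Nat.factorial_ne_zero _)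
            have n4 : (t ! : ℚ) ≠ 0 := Nat.cast_ne_zero.mpr (Nat.factorial_ne_zero _)
            have n5 : ((i+p)! : ℚ) ≠ 0 := Nat.cast_ne_zero.mpr (Nat.factorial_ne_zero _)
            have n6 : ((t+1+q)! : ℚ) ≠ 0 := Nat.cast_ne_zero.mpr (Nat.factorial_ne_zero _)
            have n7 : ((i+t+q+1)! : ℚ) ≠ 0 := Nat.cast_ne_zero.mpr (Nat.factorial_ne_zero _)
            have n8 : ((t+1+q+(i+(t+1)))! : ℚ) ≠ 0 := Nat.cast_ne_zero.mpr (Nat.factorial_ne_zero _)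
            have n9 : ((2*(t+1+q)+(i+p)+1+i)! : ℚ) ≠ 0 := Nat.cast_ne_zero.mpr (Nat.factorial_ne_zero _)
            have n10 : ((i+2*t+2*q+p+3)! : ℚ) ≠ 0 := Nat.cast_ne_zero.mpr (Nat.factorial_ne_zero _)
            have E1 : (((t:ℚ)+1)*((i:ℚ)+t+q+2)*((q:ℚ)+1)*((i:ℚ)+2*t+2*q+p+4))
                  * ((t ! : ℚ) * ↑q ! * ↑p ! * ↑i ! * ↑((i+t+q+1)!) * ↑((i+2*t+2*q+p+3)!))
                  * (↑i ! * ↑(t + 1)! * ↑((t + 1 + q + 1 + (i + (t + 1))).choose (t + 1)) *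
                      ↑((t + 1 + q + 1).choose (t + 1)) * ↑((i + p).choose i) *
                      ↑((2 * (t + 1 + q) + (i + p) + 2 + i).choose i))
                = (((i:ℚ)+2*t+q+3)*((t:ℚ)+q+2)*(2*(i:ℚ)+2*t+2*q+p+4))
                  * (↑((t+1+q+(i+(t+1)))!) * ↑((t+1+q)!) * ↑((i+p)!) * ↑((2*(t+1+q)+(i+p)+1+i)!)) := by
              rw [Nat.cast_choose ℚ (show t+1 ≤ t+1+q+1+(i+(t+1)) by omega),
                  Nat.cast_choose ℚ (show t+1 ≤ t+1+q+1 by omega),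
                  Nat.cast_choose ℚ (show i ≤ i+p by omega),
                  Nat.cast_choose ℚ (show i ≤ 2*(t+1+q)+(i+p)+2+i by omega)]
              simp only [show t+1+q+1+(i+(t+1))-(t+1) = i+t+q+2 by omega,
                  show t+1+q+1-(t+1) = q+1 by omega, show i+p-i = p by omega,
                  show 2*(t+1+q)+(i+p)+2+i-i = i+2*t+2*q+p+4 by omega]
              rw [show t+1+q+1+(i+(t+1)) = (t+1+q+(i+(t+1)))+1 by ring,
                  show 2*(t+1+q)+(i+p)+2+i = (2*(t+1+q)+(i+p)+1+i)+1 by ring,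
                  show i+t+q+2 = (i+t+q+1)+1 by ring,
                  show i+2*t+2*q+p+4 = (i+2*t+2*q+p+3)+1 by ring]
              rw [fcs_aux (t+1+q+(i+(t+1))), fcs_aux (2*(t+1+q)+(i+p)+1+i), fcs_aux (i+t+q+1),
                  fcs_aux (i+2*t+2*q+p+3), fcs_aux (t+1+q), fcs_aux q, fcs_aux t]
              have h1 : ((i:ℚ)+t+q+1)+1 ≠ 0 := by positivity
              have h2 : ((i:ℚ)+2*t+2*q+p+3)+1 ≠ 0 := by positivity
              have h3 : ((t:ℚ)+1) ≠ 0 := by positivity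
              have h4 : ((q:ℚ)+1) ≠ 0 := by positivity
              push_cast
              field_simp
              ring
            have E2 : (((t:ℚ)+1)*((p:ℚ)+1))
                  * ((t ! : ℚ) * ↑q ! * ↑p ! * ↑i ! * ↑((i+t+q+1)!) * ↑((i+2*t+2*q+p+3)!))
                  * (↑i ! * ↑(t + 1)! * ↑((t + 1 + q + (i + (t + 1))).choose (t + 1)) *
                      ↑((t + 1 + q).choose (t + 1)) * ↑((i + p + 1).choose i) *
                      ↑((2 * (t + 1 + q) + (i + p) + 1 + i).choose i))
                = ((i:ℚ)+p+1)
                  * (↑((t+1+q+(i+(t+1)))!) * ↑((t+1+q)!) * ↑((i+p)!) * ↑((2*(t+1+q)+(i+p)+1+i)!)) := by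
              rw [Nat.cast_choose ℚ (show t+1 ≤ t+1+q+(i+(t+1)) by omega),
                  Nat.cast_choose ℚ (show t+1 ≤ t+1+q by omega),
                  Nat.cast_choose ℚ (show i ≤ i+p+1 by omega),
                  Nat.cast_choose ℚ (show i ≤ 2*(t+1+q)+(i+p)+1+i by omega)]
              simp only [show t+1+q+(i+(t+1))-(t+1) = i+t+q+1 by omega,
                  show t+1+q-(t+1) = q by omega, show i+p+1-i = p+1 by omega,
                  show 2*(t+1+q)+(i+p)+1+i-i = i+2*t+2*q+p+3 by omega]
              rw [fcs_aux (i+p), fcs_aux p, fcs_aux t]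
              have h3 : ((t:ℚ)+1) ≠ 0 := by positivity
              have h4 : ((p:ℚ)+1) ≠ 0 := by positivity
              push_cast
              field_simp
            have E3 : (((i:ℚ)+1)*((i:ℚ)+t+q+2)*((q:ℚ)+1))
                  * ((t ! : ℚ) * ↑q ! * ↑p ! * ↑i ! * ↑((i+t+q+1)!) * ↑((i+2*t+2*q+p+3)!))
                  * (↑(i + 1)! * ↑t ! * ↑((t + 1 + q + (i + (t + 1))).choose t) *
                      ↑((t + 1 + q).choose t) * ↑((i + p + 1).choose (i + 1)) *
                      ↑((2 * (t + 1 + q) + (i + p) + 1 + (i + 1)).choose (i + 1)))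
                = (((i:ℚ)+p+1)*(2*(i:ℚ)+2*t+2*q+p+4))
                  * (↑((t+1+q+(i+(t+1)))!) * ↑((t+1+q)!) * ↑((i+p)!) * ↑((2*(t+1+q)+(i+p)+1+i)!)) := by
              rw [Nat.cast_choose ℚ (show t ≤ t+1+q+(i+(t+1)) by omega),
                  Nat.cast_choose ℚ (show t ≤ t+1+q by omega),
                  Nat.cast_choose ℚ (show i+1 ≤ i+p+1 by omega),
                  Nat.cast_choose ℚ (show i+1 ≤ 2*(t+1+q)+(i+p)+1+(i+1) by omega)]
              simp only [show t+1+q+(i+(t+1))-t = i+t+q+2 by omega,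
                  show t+1+q-t = q+1 by omega, show i+p+1-(i+1) = p by omega,
                  show 2*(t+1+q)+(i+p)+1+(i+1)-(i+1) = i+2*t+2*q+p+3 by omega]
              rw [show 2*(t+1+q)+(i+p)+1+(i+1) = (2*(t+1+q)+(i+p)+1+i)+1 by ring,
                  show i+t+q+2 = (i+t+q+1)+1 by ring]
              rw [fcs_aux (2*(t+1+q)+(i+p)+1+i), fcs_aux (i+t+q+1), fcs_aux (i+p), fcs_aux q, fcs_aux i]
              have h1 : ((i:ℚ)+t+q+1)+1 ≠ 0 := by positivity
              have h3 : ((i:ℚ)+1) ≠ 0 := by positivity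
              have h4 : ((q:ℚ)+1) ≠ 0 := by positivity
              push_cast
              field_simp
              ring
            rw [div_mul_eq_mul_div, div_mul_eq_mul_div, div_sub_div_same, eq_div_iff (by positivity :
                ((↑(i + p) + 1) * (2 * (↑(t + 1 + q):ℚ) + ↑(i + p) + 2)) ≠ 0)]
            push_cast
            have hM : ((((t:ℚ)+1)*((i:ℚ)+t+q+2)*((q:ℚ)+1)*((i:ℚ)+2*t+2*q+p+4)*((p:ℚ)+1)*((i:ℚ)+1))
                * ((t ! : ℚ) * ↑q ! * ↑p ! * ↑i ! * ↑((i+t+q+1)!) * ↑((i+2*t+2*q+p+3)!))) ≠ 0 := by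
              positivity
            refine mul_left_cancel₀ hM ?_
            linear_combination (((p:ℚ)+1)*((i:ℚ)+1)*((i:ℚ)+p+1)*(2*(t:ℚ)+2*q+i+p+4)) * E1
              - (((i:ℚ)+t+q+2)*((q:ℚ)+1)*((i:ℚ)+2*t+2*q+p+4)*((i:ℚ)+1)
                  *(((i:ℚ)+p+1)*(2*(t:ℚ)+2*q+i+p+4) - (i:ℚ)*((i:ℚ)+2*t+2*q+3))) * E2
              - (((t:ℚ)+1)*((i:ℚ)+2*t+2*q+p+4)*((p:ℚ)+1)*((i:ℚ)+1)*((i:ℚ)+2*t+2*q+4)) * E3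
          · have : i = k := by omega
            subst this
            obtain ⟨p, rfl⟩ : ∃ p, n = i + p := ⟨n - i, by omega⟩
            rw [if_neg (by omega), if_pos (le_refl i)]
            simp only [Nat.sub_self]
            simp only [Nat.choose_zero_right, Nat.factorial_zero, Nat.cast_one, mul_one, one_mul]
            rw [Nat.cast_choose ℚ (show i ≤ i+p by omega),
                Nat.cast_choose ℚ (show i ≤ i+p+1 by omega),
                Nat.cast_choose ℚ (show i ≤ 2*m+(i+p)+2+i by omega),
                Nat.cast_choose ℚ (show i ≤ 2*m+(i+p)+1+i by omega)]
            simp only [show i+p-i = p by omega, show i+p+1-i = p+1 by omega,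
                show 2*m+(i+p)+2+i-i = 2*m+i+p+2 by omega, show 2*m+(i+p)+1+i-i = 2*m+i+p+1 by omega]
            rw [show 2*m+(i+p)+2+i = (2*m+(i+p)+1+i)+1 by ring]
            rw [show 2*m+i+p+2 = (2*m+i+p+1)+1 by ring]
            rw [fcs_aux (i+p), fcs_aux p, fcs_aux (2*m+(i+p)+1+i), fcs_aux (2*m+i+p+1)]
            have n1 : (i ! : ℚ) ≠ 0 := Nat.cast_ne_zero.mpr (Nat.factorial_ne_zero _)
            have n2 : (p ! : ℚ) ≠ 0 := Nat.cast_ne_zero.mpr (Nat.factorial_ne_zero _)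
            have n3 : ((i+p)! : ℚ) ≠ 0 := Nat.cast_ne_zero.mpr (Nat.factorial_ne_zero _)
            have n4 : (((2*m+(i+p)+1+i))! : ℚ) ≠ 0 := Nat.cast_ne_zero.mpr (Nat.factorial_ne_zero _)
            have n5 : (((2*m+i+p+1))! : ℚ) ≠ 0 := Nat.cast_ne_zero.mpr (Nat.factorial_ne_zero _)
            have n6 : ((i:ℚ)+p+1) ≠ 0 := by positivity
            have n7 : (2*(m:ℚ)+i+p+2) ≠ 0 := by positivity
            push_cast
            field_simp
            ring
        · have hik' : i < k := by omega
          obtain ⟨p, rfl⟩ : ∃ p, n = i + p := ⟨n - i, by omega⟩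
          have hkk : k = i + (m+1) := by omega
          subst hkk
          rw [if_pos (by omega : i+1 ≤ i+(m+1)), if_pos (by omega : i ≤ i+(m+1))]
          simp only [show i+(m+1) - i = m+1 by omega, show i+(m+1) - (i+1) = m by omega]
          rw [Nat.choose_self, (by rw [Nat.choose_eq_zero_of_lt] <;> omega : m.choose (m+1) = 0)]
          rw [Nat.choose_self]
          rw [Nat.cast_choose ℚ (show m+1 ≤ m+1+(i+(m+1)) by omega),
              Nat.cast_choose ℚ (show m ≤ m+(i+(m+1)) by omega),
              Nat.cast_choose ℚ (show i ≤ i+p by omega),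
              Nat.cast_choose ℚ (show i+1 ≤ i+p+1 by omega),
              Nat.cast_choose ℚ (show i ≤ 2*m+(i+p)+2+i by omega),
              Nat.cast_choose ℚ (show i+1 ≤ 2*m+(i+p)+1+(i+1) by omega)]
          simp only [show m+1+(i+(m+1))-(m+1) = i+m+1 by omega, show m+(i+(m+1))-m = i+m+1 by omega,
              show i+p-i = p by omega, show i+p+1-(i+1) = p by omega,
              show 2*m+(i+p)+2+i-i = 2*m+i+p+2 by omega,
              show 2*m+(i+p)+1+(i+1)-(i+1) = 2*m+i+p+1 by omega]
          rw [show m+1+(i+(m+1)) = (m+(i+(m+1)))+1 by ring,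
              show 2*m+(i+p)+2+i = (2*m+(i+p)+1+i)+1 by ring,
              show 2*m+(i+p)+1+(i+1) = (2*m+(i+p)+1+i)+1 by ring,
              show 2*m+i+p+2 = (2*m+i+p+1)+1 by ring]
          rw [fcs_aux (m+(i+(m+1))), fcs_aux (2*m+(i+p)+1+i), fcs_aux (2*m+i+p+1), fcs_aux m, fcs_aux i, fcs_aux (i+p)]
          have n1 : (i ! : ℚ) ≠ 0 := Nat.cast_ne_zero.mpr (Nat.factorial_ne_zero _)
          have n2 : (p ! : ℚ) ≠ 0 := Nat.cast_ne_zero.mpr (Nat.factorial_ne_zero _)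
          have n3 : ((i+p)! : ℚ) ≠ 0 := Nat.cast_ne_zero.mpr (Nat.factorial_ne_zero _)
          have n4 : ((2*m+(i+p)+1+i)! : ℚ) ≠ 0 := Nat.cast_ne_zero.mpr (Nat.factorial_ne_zero _)
          have n5 : ((2*m+i+p+1)! : ℚ) ≠ 0 := Nat.cast_ne_zero.mpr (Nat.factorial_ne_zero _)
          have n6 : ((i+m+1)! : ℚ) ≠ 0 := Nat.cast_ne_zero.mpr (Nat.factorial_ne_zero _)
          have n7 : ((m+(i+(m+1)))! : ℚ) ≠ 0 := Nat.cast_ne_zero.mpr (Nat.factorial_ne_zero _)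
          have n8 : (m ! : ℚ) ≠ 0 := Nat.cast_ne_zero.mpr (Nat.factorial_ne_zero _)
          have n9 : ((i:ℚ)+p+1) ≠ 0 := by positivity
          have n10 : (2*(m:ℚ)+i+p+2) ≠ 0 := by positivity
          push_cast
          field_simp
          ring
        · have c1 : (m+1).choose (k-i) = 0 := Nat.choose_eq_zero_of_lt (by omega)
          have c2 : m.choose (k-i) = 0 := Nat.choose_eq_zero_of_lt (by omega)
          have c3 : m.choose (k-(i+1)) = 0 := Nat.choose_eq_zero_of_lt (by omega)
          rw [c1, c2, c3]
          simp
      · subst hin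
        have c1 : n.choose (n+1) = 0 := Nat.choose_eq_zero_of_lt (by omega)
        have c2 : (n+1).choose (n+1+1) = 0 := Nat.choose_eq_zero_of_lt (by omega)
        rw [c1, c2, if_pos hik]
        have hcoef : (((n:ℚ)+1)*(2*(m:ℚ)+1+((n:ℚ)+1)))/(((n:ℚ)+1)*(2*(m:ℚ)+(n:ℚ)+2)) = 1 := by
          rw [div_eq_one_iff_eq]
          · ring
          · positivity
        push_cast
        rw [hcoef]
        by_cases hk1 : n+1+1 ≤ k <;> simp [hk1]
      · have c1 : n.choose i = 0 := Nat.choose_eq_zero_of_lt (by omega)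
        have c2 : (n+1).choose i = 0 := Nat.choose_eq_zero_of_lt (by omega)
        have c3 : (n+1).choose (i+1) = 0 := Nat.choose_eq_zero_of_lt (by omega)
        rw [c1, c2, c3]
        by_cases hk1 : i+1 ≤ k <;> simp [hk1, if_pos hik]
    have tele : ∑ i ∈ Finset.range (k+1), (a1 i - a2 i) = g (k+1) - g 0 := by
      rw [Finset.sum_congr rfl key, Finset.sum_range_sub]
    have hg0 : g 0 = 0 := by simp [hg]
    have hgk : g (k+1) = 0 := by simp [hg]
    rw [Finset.sum_sub_distrib] at tele
    rw [hg0, hgk] at tele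
    linarith

open Nat in
/-- For nonnegative integers `ℓ, m, k` with `m ≤ ℓ`:
`C(ℓ+k,2k)·C(2k,k)·C(ℓ+m,2m)·C(2m,m)
  = ∑_{i=0}^{k} ((m+k)!·i!)/((m+i)!·k!) · C(m,k−i) · C(ℓ−m,i) · C(ℓ+m+i,i) · C(ℓ+m,2m) · C(2m,m)`;
equivalently,
`C(ℓ+k,2k)·C(2k,k) = ∑_{i=0}^{k} ((m+k)!·i!)/((m+i)!·k!) · C(m,k−i) · C(ℓ−m,i) · C(ℓ+m+i,i)`.
The factorial quotient is expressed over `ℚ`. -/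
theorem pfaff_saalschutz_rewritten (ℓ m k : ℕ) (h : m ≤ ℓ) :
    (((ℓ + k).choose (2 * k) : ℚ) * ((2 * k).choose k : ℚ) *
        ((ℓ + m).choose (2 * m) : ℚ) * ((2 * m).choose m : ℚ) =
      ∑ i ∈ Finset.range (k + 1),
        (((m + k)! : ℚ) * (i ! : ℚ)) / (((m + i)! : ℚ) * (k ! : ℚ)) *
          (m.choose (k - i) : ℚ) * ((ℓ - m).choose i : ℚ) * ((ℓ + m + i).choose i : ℚ) *
          ((ℓ + m).choose (2 * m) : ℚ) * ((2 * m).choose m : ℚ)) ∧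
    (((ℓ + k).choose (2 * k) : ℚ) * ((2 * k).choose k : ℚ) =
      ∑ i ∈ Finset.range (k + 1),
        (((m + k)! : ℚ) * (i ! : ℚ)) / (((m + i)! : ℚ) * (k ! : ℚ)) *
          (m.choose (k - i) : ℚ) * ((ℓ - m).choose i : ℚ) * ((ℓ + m + i).choose i : ℚ)) := by
  obtain ⟨n, rfl⟩ := Nat.exists_eq_add_of_le h
  have hA : (m+n+k).choose (2*k) * (2*k).choose k = (m+n+k).choose k * (m+n).choose k := by
    rcases le_or_gt k (m+n) with hk | hk
    · have := Nat.choose_mul (n := m+n+k) (k := 2*k) (s := k) (by omega)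
      rw [show m+n+k-k = m+n by omega, show 2*k-k = k by omega] at this
      exact this
    · rw [Nat.choose_eq_zero_of_lt (by omega : m+n+k < 2*k),
          Nat.choose_eq_zero_of_lt (by omega : m+n < k)]
      ring
  have hkf : (k ! : ℚ) ≠ 0 := Nat.cast_ne_zero.mpr (Nat.factorial_ne_zero _)
  have termwise : ∀ i ∈ Finset.range (k+1),
      (((m + k)! : ℚ) * (i ! : ℚ)) / (((m + i)! : ℚ) * (k ! : ℚ)) *
          (m.choose (k - i) : ℚ) * ((m + n - m).choose i : ℚ) * ((m + n + m + i).choose i : ℚ)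
      = (k ! : ℚ)⁻¹ * ((i ! : ℚ) * ((k-i)! : ℚ) * ((m+k).choose (k-i) : ℚ) * (m.choose (k-i) : ℚ)
          * (n.choose i : ℚ) * ((2*m+n+i).choose i : ℚ)) := by
    intro i hi
    rw [Finset.mem_range] at hi
    have hik : i ≤ k := by omega
    have hfac : ((m+k)! : ℚ) = ((m+k).choose (k-i) : ℚ) * ((k-i)! : ℚ) * ((m+i)! : ℚ) := by
      have h1 : k - i ≤ m + k := by omega
      have h2 := Nat.choose_mul_factorial_mul_factorial h1
      rw [show m+k-(k-i) = m+i by omega] at h2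
      exact_mod_cast h2.symm
    have hmf : ((m+i)! : ℚ) ≠ 0 := Nat.cast_ne_zero.mpr (Nat.factorial_ne_zero _)
    rw [show m+n-m = n by omega, show m+n+m+i = 2*m+n+i by omega, hfac]
    field_simp
  have h2 : (((m+n + k).choose (2 * k) : ℚ) * ((2 * k).choose k : ℚ) =
      ∑ i ∈ Finset.range (k + 1),
        (((m + k)! : ℚ) * (i ! : ℚ)) / (((m + i)! : ℚ) * (k ! : ℚ)) *
          (m.choose (k - i) : ℚ) * ((m+n - m).choose i : ℚ) * ((m+n + m + i).choose i : ℚ)) := by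
    rw [Finset.sum_congr rfl termwise, ← Finset.mul_sum, ← core_aux m n k]
    rw [show ((m+n+k).choose (2*k) : ℚ) * ((2*k).choose k : ℚ)
        = (((m+n+k).choose (2*k) * (2*k).choose k : ℕ) : ℚ) by push_cast; ring, hA]
    push_cast
    field_simp
  refine ⟨?_, h2⟩
  rw [h2, Finset.sum_mul, Finset.sum_mul]
end

section
/- For all nonnegative integers n and k with k ≤ n−1 (n ≥ 1), one has ∑_{ℓ=k}^{n−1} (2ℓ+1) · C(ℓ+k, 2k) · C(2k, k) = n · C(n, k+1) · C(n+k, k). -/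
lemma aux_step (n k : ℕ) (h : k + 1 ≤ n) :
    n * n.choose (k + 1) * (n + k).choose k +
      (2 * n + 1) * (n + k).choose (2 * k) * (2 * k).choose k =
    (n + 1) * (n + 1).choose (k + 1) * (n + 1 + k).choose k := by
  have hA : (n + k).choose (2 * k) * (2 * k).choose k =
      (n + k).choose k * n.choose k := by
    have := Nat.choose_mul (n := n + k) (k := 2 * k) (s := k)
      (by omega)
    simpa [two_mul, Nat.add_sub_cancel] using this
  have hf2 : (n + k).choose k * (n + k + 1) = (n + k + 1).choose k * (n + 1) := by
    have := Nat.choose_mul_succ_eq (n + k) k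
    simpa [Nat.add_sub_cancel, show n + k + 1 - k = n + 1 by omega] using this
  obtain ⟨m, rfl⟩ : ∃ m, n = k + (m + 1) := ⟨n - k - 1, by omega⟩
  have hf1 : (k + (m + 1)).choose (k + 1) * (k + 1) =
      (k + (m + 1)).choose k * (m + 1) := by
    have := Nat.choose_succ_right_eq (k + (m + 1)) k
    simpa [show k + (m + 1) - k = m + 1 by omega] using this
  set a := (k + (m + 1)).choose k
  set b := (k + (m + 1)).choose (k + 1)
  set c := (k + (m + 1) + k).choose k
  set d := (k + (m + 1) + k + 1).choose k with hd
  have hp : (k + (m + 1) + 1).choose (k + 1) = a + b := by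
    rw [Nat.choose_succ_succ]
  have hd' : (k + (m + 1) + 1 + k).choose k = d := by
    rw [hd]; ring_nf
  rw [hd', hp, mul_assoc, mul_assoc, hA]
  -- goal: (k+m+1) * (b * c) + (2*(k+m+1)+1) * (c * a) = (k+m+2) * ((a+b) * d)
  zify at hf1 hf2 ⊢
  linear_combination ((a : ℤ) + b) * hf2 - (c : ℤ) * hf1

/-- For `n ≥ 1` and `k ≤ n−1`:
`∑_{ℓ=k}^{n−1} (2ℓ+1)·C(ℓ+k,2k)·C(2k,k) = n·C(n,k+1)·C(n+k,k)`. -/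
theorem sum_two_ell_add_one_choose (n k : ℕ) (hn : 1 ≤ n) (hk : k ≤ n - 1) :
    ∑ ℓ ∈ Finset.Icc k (n - 1), (2 * ℓ + 1) * (ℓ + k).choose (2 * k) * (2 * k).choose k =
      n * n.choose (k + 1) * (n + k).choose k := by
  have hkn : k + 1 ≤ n := by omega
  clear hn hk
  induction n, hkn using Nat.le_induction with
  | base =>
    simp only [Nat.add_sub_cancel, Finset.Icc_self, Finset.sum_singleton]
    have h1 : (k + k).choose (2 * k) = 1 := by
      rw [two_mul, Nat.choose_self]
    rw [h1, mul_one]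
    rw [Nat.choose_self, mul_one]
    have h2 : k + 1 + k = 2 * k + 1 := by ring
    have hsym : (2 * k + 1).choose k = (2 * k + 1).choose (k + 1) := by
      have := Nat.choose_symm (show k + 1 ≤ 2 * k + 1 by omega)
      simpa [show 2 * k + 1 - (k + 1) = k by omega] using this
    have h3 := Nat.add_one_mul_choose_eq (2 * k) k
    rw [h2, hsym, h3, Nat.mul_comm]
  | succ n hn ih =>
    have hsum : Finset.Icc k (n + 1 - 1) = insert n (Finset.Icc k (n - 1)) := by
      rw [Nat.add_sub_cancel]
      ext x; simp [Finset.mem_Icc, Finset.mem_insert]; omega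
    rw [hsum, Finset.sum_insert (by simp [Finset.mem_Icc]; omega), ih, Nat.add_comm]
    exact aux_step n k hn
end

section
/- For all nonnegative integers n and k with k ≤ n−1 (n ≥ 1), one has ∑_{ℓ=k}^{n−1} (−1)^ℓ · (2ℓ+1) · C(ℓ+k, 2k) · C(2k, k) = (−1)^{n−1} · n · C(n−1, k) · C(n+k, k). -/
/-- For `n ≥ 1` and `k ≤ n−1`:
`∑_{ℓ=k}^{n−1} (−1)^ℓ·(2ℓ+1)·C(ℓ+k,2k)·C(2k,k) = (−1)^{n−1}·n·C(n−1,k)·C(n+k,k)`. -/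
theorem sum_alt_two_ell_add_one_choose (n k : ℕ) (hn : 1 ≤ n) (hk : k ≤ n - 1) :
    ∑ ℓ ∈ Finset.Icc k (n - 1),
        (-1 : ℤ) ^ ℓ * (2 * (ℓ : ℤ) + 1) * ((ℓ + k).choose (2 * k) : ℤ) * ((2 * k).choose k : ℤ) =
      (-1 : ℤ) ^ (n - 1) * (n : ℤ) * ((n - 1).choose k : ℤ) * ((n + k).choose k : ℤ) := by
  obtain ⟨m, rfl⟩ : ∃ m, n = m + 1 := ⟨n - 1, (Nat.succ_pred_eq_of_pos hn).symm⟩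
  simp only [Nat.add_sub_cancel] at hk ⊢
  induction m, hk using Nat.le_induction with
  | base =>
    rw [Finset.Icc_self, Finset.sum_singleton]
    have h1 : (2 * k).choose k * (2 * k + 1) = (2 * k + 1).choose k * (2 * k + 1 - k) :=
      Nat.choose_mul_succ_eq (2 * k) k
    have h1' : ((2 * k).choose k : ℤ) * (2 * k + 1) = ((2 * k + 1).choose k : ℤ) * (k + 1) := by
      have h : 2 * k + 1 - k = k + 1 := by omega
      rw [h] at h1; exact_mod_cast h1
    have hkk : (k + k).choose (2 * k) = 1 := by
      rw [show k + k = 2 * k by ring, Nat.choose_self]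
    rw [hkk, Nat.choose_self, show k + 1 + k = 2 * k + 1 by ring]
    push_cast
    linear_combination ((-1 : ℤ)) ^ k * h1'
  | succ m hm ih =>
    rw [Finset.sum_Icc_succ_top (by omega : k ≤ m + 1), ih (by omega)]
    have e1 : (m + 1 + k).choose (2 * k) * (2 * k).choose k
        = (m + 1 + k).choose k * (m + 1).choose k := by
      have h := Nat.choose_mul (n := m + 1 + k) (k := 2 * k) (s := k) (show k ≤ 2 * k by omega)
      rw [h, show m + 1 + k - k = m + 1 by omega, show 2 * k - k = k by omega]
    have e1' : ((m + 1 + k).choose (2 * k) : ℤ) * ((2 * k).choose k : ℤ)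
        = ((m + 1 + k).choose k : ℤ) * ((m + 1).choose k : ℤ) := by exact_mod_cast e1
    have e2 := Nat.choose_mul_succ_eq m k
    have e2' : ((m).choose k : ℤ) * (m + 1)
        = ((m + 1).choose k : ℤ) * ((m : ℤ) + 1 - k) := by
      rw [show m + 1 - k = m + 1 - k by rfl] at e2
      zify [show k ≤ m + 1 by omega] at e2
      linarith [e2]
    have e3 := Nat.choose_mul_succ_eq (m + 1 + k) k
    rw [show m + 1 + k + 1 - k = m + 2 by omega,
      show m + 1 + k + 1 = m + 1 + 1 + k by omega] at e3
    have e3' : ((m + 1 + k).choose k : ℤ) * ((m : ℤ) + k + 2)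
        = ((m + 1 + 1 + k).choose k : ℤ) * ((m : ℤ) + 2) := by
      have := congrArg (Nat.cast (R := ℤ)) e3
      push_cast at this
      linarith [this]
    push_cast
    linear_combination (-1 : ℤ) ^ (m + 1) * (2 * m + 3) * e1'
      - (-1 : ℤ) ^ (m + 1) * ((m + 1 + k).choose k : ℤ) * e2'
      + (-1 : ℤ) ^ (m + 1) * ((m + 1).choose k : ℤ) * e3'
end

section
/- For all nonnegative integers ℓ, i, j with i ≤ j, one has C(ℓ+i, 2i) · C(2i, i) · C(ℓ+j, 2j) · C(2j, j) = ∑_{k=0}^{i} C(i+j, i) · C(j, i−k) · C(j+k, k) · C(ℓ+j+k, 2j+2k) · C(2j+2k, j+k). -/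
open Nat



def D (ℓ a : ℕ) : ℕ := (ℓ + a).choose (2 * a) * (2 * a).choose a

lemma Dcast (ℓ a : ℕ) (h : a ≤ ℓ) :
    (D ℓ a : ℚ) = (ℓ + a)! / ((a)! * (a)! * (ℓ - a)!) := by
  have h1 : 2 * a ≤ ℓ + a := by omega
  have h2 : a ≤ 2 * a := by omega
  simp only [D]
  push_cast
  rw [Nat.cast_choose ℚ h1, Nat.cast_choose ℚ h2]
  rw [show ℓ + a - 2 * a = ℓ - a from by omega, show 2 * a - a = a from by omega]
  have n1 : ((2*a)! : ℚ) ≠ 0 := by positivity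
  have n2 : ((a)! : ℚ) ≠ 0 := by positivity
  have n3 : ((ℓ-a)! : ℚ) ≠ 0 := by positivity
  field_simp

lemma Drec (ℓ a : ℕ) :
    (a + 1) ^ 2 * D ℓ (a + 1) = (ℓ - a) * (ℓ + a + 1) * D ℓ a := by
  rcases Nat.lt_or_ge ℓ (a + 1) with h | h
  · -- ℓ ≤ a : both sides zero
    have hz : D ℓ (a + 1) = 0 := by
      simp [D, Nat.choose_eq_zero_of_lt (show ℓ + (a+1) < 2 * (a+1) from by omega)]
    rw [hz]
    rcases Nat.lt_or_ge ℓ a with h' | h'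
    · have : D ℓ a = 0 := by
        simp [D, Nat.choose_eq_zero_of_lt (show ℓ + a < 2 * a from by omega)]
      simp [this]
    · have : ℓ - a = 0 := by omega
      simp [this]
  · obtain ⟨d, rfl⟩ : ∃ d, ℓ = a + 1 + d := ⟨ℓ - (a+1), by omega⟩
    have key : (((a + 1) ^ 2 * D (a+1+d) (a + 1) : ℕ) : ℚ)
        = (((a+1+d) - a) * ((a+1+d) + a + 1) * D (a+1+d) a : ℕ) := by
      push_cast
      rw [Dcast _ _ (by omega : a + 1 ≤ a + 1 + d), Dcast _ _ (by omega : a ≤ a + 1 + d)]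
      rw [show a+1+d - (a+1) = d from by omega, show a+1+d - a = d + 1 from by omega]
      rw [show a+1+d + (a+1) = (a+1+d+a) + 1 from by omega]
      rw [Nat.factorial_succ (a+1+d+a), Nat.factorial_succ a, Nat.factorial_succ d]
      have n1 : ((a)! : ℚ) ≠ 0 := by positivity
      have n2 : ((d)! : ℚ) ≠ 0 := by positivity
      have n3 : ((a+1+d+a)! : ℚ) ≠ 0 := by positivity
      push_cast
      field_simp
    exact_mod_cast key

lemma Dmix (ℓ m a : ℕ) (hma : m ≤ a) :
    (ℓ - m) * (ℓ + m + 1) * D ℓ a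
      = (a + 1) ^ 2 * D ℓ (a + 1) + (a * (a + 1) - m * (m + 1)) * D ℓ a := by
  rcases Nat.lt_or_ge ℓ a with h | h
  · have h1 : D ℓ a = 0 := by
      simp [D, Nat.choose_eq_zero_of_lt (show ℓ + a < 2 * a from by omega)]
    have h2 : D ℓ (a + 1) = 0 := by
      simp [D, Nat.choose_eq_zero_of_lt (show ℓ + (a+1) < 2 * (a+1) from by omega)]
    simp [h1, h2]
  · rw [Drec ℓ a, ← add_mul]
    congr 1
    have hle : m * (m + 1) ≤ a * (a + 1) := Nat.mul_le_mul hma (by omega)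
    have hm : m ≤ ℓ := le_trans hma h
    zify [h, hm, hle]
    ring


lemma coef_zero (n j : ℕ) (h : n + 1 ≤ j) :
    (n+1)^2 * ((n+1+j).choose (n+1) * j.choose (n+1)) =
    (n+j).choose n * j.choose n * (j*(j+1) - n*(n+1)) := by
  have hle : n*(n+1) ≤ j*(j+1) := Nat.mul_le_mul (by omega) (by omega)
  qify [hle]
  rw [Nat.cast_choose ℚ (show n+1 ≤ n+1+j by omega),
      Nat.cast_choose ℚ (show n+1 ≤ j from h),
      Nat.cast_choose ℚ (show n ≤ n+j by omega),
      Nat.cast_choose ℚ (show n ≤ j by omega)]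
  rw [show n+1+j-(n+1) = j from by omega, show n+j-n = j from by omega,
      show j-n = (j-(n+1))+1 from by omega, show n+1+j = (n+j)+1 from by omega]
  rw [Nat.factorial_succ (n+j), Nat.factorial_succ n, Nat.factorial_succ (j-(n+1))]
  have n1 : ((j)! : ℚ) ≠ 0 := by positivity
  have n2 : ((n)! : ℚ) ≠ 0 := by positivity
  have n3 : ((n+j)! : ℚ) ≠ 0 := by positivity
  have n4 : ((j-(n+1))! : ℚ) ≠ 0 := by positivity
  have n5 : ((j : ℚ) - (n+1)) + 1 ≠ 0 := by
    have : (n:ℚ) + 1 ≤ j := by exact_mod_cast h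
    nlinarith
  push_cast [show n+1 ≤ j from h]
  field_simp
  ring


lemma coef_top (n j : ℕ) :
    (n+1)^2 * ((n+1+j).choose (n+1) * (j+n+1).choose (n+1)) =
    (n+j).choose n * (j+n).choose n * (j+n+1)^2 := by
  qify
  rw [Nat.cast_choose ℚ (show n+1 ≤ n+1+j by omega),
      Nat.cast_choose ℚ (show n+1 ≤ j+n+1 by omega),
      Nat.cast_choose ℚ (show n ≤ n+j by omega),
      Nat.cast_choose ℚ (show n ≤ j+n by omega)]
  rw [show n+1+j-(n+1) = j from by omega, show j+n+1-(n+1) = j from by omega,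
      show n+j-n = j from by omega, show j+n-n = j from by omega,
      show n+1+j = (n+j)+1 from by omega]
  rw [Nat.factorial_succ (n+j), Nat.factorial_succ (j+n), Nat.factorial_succ n]
  have n1 : ((j)! : ℚ) ≠ 0 := by positivity
  have n2 : ((n)! : ℚ) ≠ 0 := by positivity
  have n3 : ((n+j)! : ℚ) ≠ 0 := by positivity
  have n4 : ((j+n)! : ℚ) ≠ 0 := by positivity
  push_cast
  field_simp
  ring

lemma coef_mid (n j k : ℕ) (h : n + 1 ≤ j) (hk : k < n) :
    (n+1)^2 * ((n+1+j).choose (n+1) * j.choose (n-k) * (j+k+1).choose (k+1)) =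
    (n+j).choose n * j.choose (n-k) * (j+k).choose k * (j+k+1)^2
    + (n+j).choose n * j.choose (n-k-1) * (j+k+1).choose (k+1) * ((j+k+1)*(j+k+2) - n*(n+1)) := by
  obtain ⟨a, ha⟩ : ∃ a, n - k = a + 1 := ⟨n-k-1, by omega⟩
  have haj : a + 1 ≤ j := by omega
  rw [ha, show a+1-1 = a from by omega]
  have hle : n*(n+1) ≤ (j+k+1)*(j+k+2) := Nat.mul_le_mul (by omega) (by omega)
  qify [hle]
  rw [Nat.cast_choose ℚ (show n+1 ≤ n+1+j by omega),
      Nat.cast_choose ℚ (show a+1 ≤ j from haj),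
      Nat.cast_choose ℚ (show k+1 ≤ j+k+1 by omega),
      Nat.cast_choose ℚ (show n ≤ n+j by omega),
      Nat.cast_choose ℚ (show k ≤ j+k by omega),
      Nat.cast_choose ℚ (show a ≤ j by omega)]
  rw [show n+1+j-(n+1) = j from by omega, show j+k+1-(k+1) = j from by omega,
      show n+j-n = j from by omega, show j+k-k = j from by omega,
      show j-a = (j-(a+1))+1 from by omega,
      show n+1+j = (n+j)+1 from by omega]
  rw [Nat.factorial_succ (n+j), Nat.factorial_succ (j+k), Nat.factorial_succ n,
      Nat.factorial_succ a, Nat.factorial_succ k, Nat.factorial_succ (j-(a+1))]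
  have n1 : ((j)! : ℚ) ≠ 0 := by positivity
  have n2 : ((n)! : ℚ) ≠ 0 := by positivity
  have n3 : ((n+j)! : ℚ) ≠ 0 := by positivity
  have n4 : ((j+k)! : ℚ) ≠ 0 := by positivity
  have n5 : ((a)! : ℚ) ≠ 0 := by positivity
  have n6 : ((k)! : ℚ) ≠ 0 := by positivity
  have n7 : ((j-(a+1))! : ℚ) ≠ 0 := by positivity
  have n8 : ((j : ℚ) - (a+1)) + 1 ≠ 0 := by
    have : (a:ℚ) + 1 ≤ j := by exact_mod_cast haj
    nlinarith
  have hsub : ((j - (a+1) : ℕ) : ℚ) = (j:ℚ) - (a+1) := by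
    push_cast [Nat.cast_sub haj]
    ring
  have hn : (n : ℚ) = (a : ℚ) + 1 + (k : ℚ) := by
    have : n = a + 1 + k := by omega
    exact_mod_cast this
  push_cast
  rw [hsub, hn]
  field_simp
  ring
lemma main_aux (ℓ j : ℕ) : ∀ i, i ≤ j →
    D ℓ i * D ℓ j = ∑ k ∈ Finset.range (i+1),
      (i+j).choose i * j.choose (i-k) * (j+k).choose k * D ℓ (j+k) := by
  intro i
  induction i with
  | zero => intro _; simp [D]
  | succ n ih =>
    intro h
    have IH := ih (by omega)
    have r1 : ∀ k : ℕ, n+1-(k+1) = n-k := fun k => by omega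
    have r2 : ∀ k : ℕ, j+(k+1) = j+k+1 := fun k => by omega
    have r3 : ∀ k : ℕ, n-(k+1) = n-k-1 := fun k => by omega
    have r4 : ∀ k : ℕ, j+k+1+1 = j+k+2 := fun k => by omega
    -- peeling lemmas
    have peelF : (∑ k ∈ Finset.range (n+1+1),
          (n+1+j).choose (n+1) * j.choose (n+1-k) * (j+k).choose k * D ℓ (j+k))
        = ((∑ k ∈ Finset.range n,
            (n+1+j).choose (n+1) * j.choose (n-k) * (j+k+1).choose (k+1) * D ℓ (j+k+1))
          + (n+1+j).choose (n+1) * (j+n+1).choose (n+1) * D ℓ (j+n+1))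
          + (n+1+j).choose (n+1) * j.choose (n+1) * D ℓ j := by
      rw [Finset.sum_range_succ', Finset.sum_range_succ]
      simp [r1, r2]
    have peelA : (∑ k ∈ Finset.range (n+1),
          (n+j).choose n * j.choose (n-k) * (j+k).choose k * ((j+k+1)^2 * D ℓ (j+k+1)))
        = (∑ k ∈ Finset.range n,
            (n+j).choose n * j.choose (n-k) * (j+k).choose k * ((j+k+1)^2 * D ℓ (j+k+1)))
          + (n+j).choose n * (j+n).choose n * ((j+n+1)^2 * D ℓ (j+n+1)) := by
      rw [Finset.sum_range_succ]
      simp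
    have peelG : (∑ k ∈ Finset.range (n+1),
          (n+j).choose n * j.choose (n-k) * (j+k).choose k * (((j+k)*(j+k+1) - n*(n+1)) * D ℓ (j+k)))
        = (∑ k ∈ Finset.range n,
            (n+j).choose n * j.choose (n-k-1) * (j+k+1).choose (k+1) * (((j+k+1)*(j+k+2) - n*(n+1)) * D ℓ (j+k+1)))
          + (n+j).choose n * j.choose n * ((j*(j+1) - n*(n+1)) * D ℓ j) := by
      rw [Finset.sum_range_succ']
      simp [r2, r3, r4]
    -- pointwise middle identity summed
    have hmid : (n+1)^2 * (∑ k ∈ Finset.range n,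
          (n+1+j).choose (n+1) * j.choose (n-k) * (j+k+1).choose (k+1) * D ℓ (j+k+1))
        = (∑ k ∈ Finset.range n,
            (n+j).choose n * j.choose (n-k) * (j+k).choose k * ((j+k+1)^2 * D ℓ (j+k+1)))
          + ∑ k ∈ Finset.range n,
            (n+j).choose n * j.choose (n-k-1) * (j+k+1).choose (k+1) * (((j+k+1)*(j+k+2) - n*(n+1)) * D ℓ (j+k+1)) := by
      rw [Finset.mul_sum, ← Finset.sum_add_distrib]
      refine Finset.sum_congr rfl fun k hk => ?_
      have hkn : k < n := Finset.mem_range.mp hk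
      calc (n+1)^2 * ((n+1+j).choose (n+1) * j.choose (n-k) * (j+k+1).choose (k+1) * D ℓ (j+k+1))
          = ((n+1)^2 * ((n+1+j).choose (n+1) * j.choose (n-k) * (j+k+1).choose (k+1))) * D ℓ (j+k+1) := by
            ring
        _ = ((n+j).choose n * j.choose (n-k) * (j+k).choose k * (j+k+1)^2
              + (n+j).choose n * j.choose (n-k-1) * (j+k+1).choose (k+1) * ((j+k+1)*(j+k+2) - n*(n+1)))
              * D ℓ (j+k+1) := by rw [coef_mid n j k h hkn]
        _ = _ := by ring
    have htop : (n+1)^2 * ((n+1+j).choose (n+1) * (j+n+1).choose (n+1) * D ℓ (j+n+1))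
        = (n+j).choose n * (j+n).choose n * ((j+n+1)^2 * D ℓ (j+n+1)) := by
      calc (n+1)^2 * ((n+1+j).choose (n+1) * (j+n+1).choose (n+1) * D ℓ (j+n+1))
          = ((n+1)^2 * ((n+1+j).choose (n+1) * (j+n+1).choose (n+1))) * D ℓ (j+n+1) := by ring
        _ = ((n+j).choose n * (j+n).choose n * (j+n+1)^2) * D ℓ (j+n+1) := by rw [coef_top]
        _ = _ := by ring
    have hzero : (n+1)^2 * ((n+1+j).choose (n+1) * j.choose (n+1) * D ℓ j)
        = (n+j).choose n * j.choose n * ((j*(j+1) - n*(n+1)) * D ℓ j) := by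
      calc (n+1)^2 * ((n+1+j).choose (n+1) * j.choose (n+1) * D ℓ j)
          = ((n+1)^2 * ((n+1+j).choose (n+1) * j.choose (n+1))) * D ℓ j := by ring
        _ = ((n+j).choose n * j.choose n * (j*(j+1) - n*(n+1))) * D ℓ j := by rw [coef_zero n j h]
        _ = _ := by ring
    apply Nat.eq_of_mul_eq_mul_left (show 0 < (n+1)^2 by positivity)
    calc (n+1)^2 * (D ℓ (n+1) * D ℓ j)
        = ((n+1)^2 * D ℓ (n+1)) * D ℓ j := by ring
      _ = ((ℓ-n)*(ℓ+n+1) * D ℓ n) * D ℓ j := by rw [Drec]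
      _ = (ℓ-n)*(ℓ+n+1) * (D ℓ n * D ℓ j) := by ring
      _ = (ℓ-n)*(ℓ+n+1) * ∑ k ∈ Finset.range (n+1),
            (n+j).choose n * j.choose (n-k) * (j+k).choose k * D ℓ (j+k) := by rw [IH]
      _ = ∑ k ∈ Finset.range (n+1),
            (n+j).choose n * j.choose (n-k) * (j+k).choose k * ((ℓ-n)*(ℓ+n+1) * D ℓ (j+k)) := by
          rw [Finset.mul_sum]; exact Finset.sum_congr rfl fun k _ => by ring
      _ = ∑ k ∈ Finset.range (n+1),
            (n+j).choose n * j.choose (n-k) * (j+k).choose k *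
              ((j+k+1)^2 * D ℓ (j+k+1) + ((j+k)*(j+k+1) - n*(n+1)) * D ℓ (j+k)) := by
          refine Finset.sum_congr rfl fun k _ => ?_
          rw [Dmix ℓ n (j+k) (by omega)]
      _ = (∑ k ∈ Finset.range (n+1),
            (n+j).choose n * j.choose (n-k) * (j+k).choose k * ((j+k+1)^2 * D ℓ (j+k+1)))
          + ∑ k ∈ Finset.range (n+1),
            (n+j).choose n * j.choose (n-k) * (j+k).choose k * (((j+k)*(j+k+1) - n*(n+1)) * D ℓ (j+k)) := by
          rw [← Finset.sum_add_distrib]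
          exact Finset.sum_congr rfl fun k _ => by ring
      _ = (n+1)^2 * ∑ k ∈ Finset.range (n+1+1),
            (n+1+j).choose (n+1) * j.choose (n+1-k) * (j+k).choose k * D ℓ (j+k) := by
          rw [peelA, peelG, peelF, mul_add ((n+1)^2), mul_add ((n+1)^2), hmid, htop, hzero]
          omega

/-- For nonnegative integers `ℓ, i, j` with `i ≤ j`:
`C(ℓ+i,2i)·C(2i,i)·C(ℓ+j,2j)·C(2j,j)
  = ∑_{k=0}^{i} C(i+j,i)·C(j,i−k)·C(j+k,k)·C(ℓ+j+k,2j+2k)·C(2j+2k,j+k)`. -/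
theorem choose_prod_expansion (ℓ i j : ℕ) (h : i ≤ j) :
    (ℓ + i).choose (2 * i) * (2 * i).choose i * (ℓ + j).choose (2 * j) * (2 * j).choose j =
      ∑ k ∈ Finset.range (i + 1),
        (i + j).choose i * j.choose (i - k) * (j + k).choose k *
          (ℓ + j + k).choose (2 * j + 2 * k) * (2 * j + 2 * k).choose (j + k) := by
  calc (ℓ + i).choose (2 * i) * (2 * i).choose i * (ℓ + j).choose (2 * j) * (2 * j).choose j
      = D ℓ i * D ℓ j := by simp only [D]; ring
    _ = ∑ k ∈ Finset.range (i+1),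
          (i+j).choose i * j.choose (i-k) * (j+k).choose k * D ℓ (j+k) := main_aux ℓ j i h
    _ = _ := by
        refine Finset.sum_congr rfl fun k _ => ?_
        simp only [D]
        rw [show ℓ + (j+k) = ℓ + j + k from by omega, show 2*(j+k) = 2*j+2*k from by ring]
        ring
end

section
/- For every positive integer r, every positive integer m, and all nonnegative integers i_1, …, i_m, there exist integers d_s (for max{i_1,…,i_m} ≤ s ≤ r(i_1+⋯+i_m), independent of k) such that for every nonnegative integer k one has ∏_{j=1}^{m} C(k+i_j, 2i_j)^r · C(2i_j, i_j) = ∑_{s=max{i_1,…,i_m}}^{r(i_1+⋯+i_m)} d_s · C(k+s, 2s) · C(2s, s). -/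
open Finset

/-- The basis functions `b s k = C(k+s,2s)·C(2s,s)` as integers. -/
def BB (s k : ℕ) : ℤ := ((k + s).choose (2 * s) : ℤ) * ((2 * s).choose s : ℤ)

/-- ℤ-version of `choose_succ_right_eq`, valid unconditionally. -/
lemma zChooseSucc (n k : ℕ) : (n.choose (k+1) : ℤ) * (k+1) = (n.choose k : ℤ) * ((n : ℤ) - k) := by
  rcases le_or_gt k n with h | h
  · have h2 := congrArg (fun x : ℕ => (x : ℤ)) (Nat.choose_succ_right_eq n k)
    push_cast [Nat.cast_sub h] at h2
    linarith [h2]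
  · rw [Nat.choose_eq_zero_of_lt h, Nat.choose_eq_zero_of_lt (by omega)]
    simp

lemma zSuccMulChoose (n k : ℕ) :
    ((n : ℤ) + 1) * (n.choose k : ℤ) = ((n+1).choose (k+1) : ℤ) * (k+1) := by
  exact_mod_cast congrArg (fun x : ℕ => (x : ℤ)) (Nat.add_one_mul_choose_eq n k)

/-- The three-term recurrence `(k(k+1) - s(s+1))·b_s(k) = (s+1)²·b_{s+1}(k)`. -/
lemma recR (s k : ℕ) :
    ((k : ℤ) * (k + 1) - s * (s + 1)) * BB s k = ((s : ℤ) + 1) ^ 2 * BB (s+1) k := by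
  rcases lt_or_ge k (s+1) with h | h
  · have hz : BB (s+1) k = 0 := by
      have : k + (s+1) < 2 * (s+1) := by omega
      simp [BB, Nat.choose_eq_zero_of_lt this]
    rw [hz, mul_zero]
    rcases lt_or_ge k s with h2 | h2
    · have : k + s < 2 * s := by omega
      simp [BB, Nat.choose_eq_zero_of_lt this]
    · have hks : k = s := by omega
      subst hks; ring
  · have h1 : ((k+s).choose (2*s+1) : ℤ) * (2*(s:ℤ)+1)
        = ((k+s).choose (2*s) : ℤ) * ((k : ℤ) - s) := by
      have := zChooseSucc (k+s) (2*s)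
      push_cast at this ⊢
      linear_combination this
    have h2 : ((k : ℤ) + s + 1) * ((k+s).choose (2*s+1) : ℤ)
        = ((k+s+1).choose (2*s+2) : ℤ) * (2*(s:ℤ)+2) := by
      have := zSuccMulChoose (k+s) (2*s+1)
      push_cast at this ⊢
      linear_combination this
    have h3 : (2*(s:ℤ)+1) * ((2*s).choose s : ℤ) = ((2*s+1).choose (s+1) : ℤ) * ((s:ℤ)+1) := by
      have := zSuccMulChoose (2*s) s
      push_cast at this ⊢; linear_combination this
    have hsym : ((2*s+1).choose s : ℕ) = ((2*s+1).choose (s+1) : ℕ) := by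
      have := Nat.choose_symm (n := 2*s+1) (k := s) (by omega)
      rw [show 2*s+1-s = s+1 by omega] at this
      omega
    have h5 : (2*(s:ℤ)+2) * ((2*s+1).choose (s+1) : ℤ)
        = ((2*s+2).choose (s+1) : ℤ) * ((s:ℤ)+1) := by
      have := zSuccMulChoose (2*s+1) s
      rw [hsym] at this
      push_cast at this ⊢; linear_combination this
    show _ = _
    unfold BB
    have e1 : (2*(s+1)) = 2*s+2 := by ring
    rw [e1, show k + (s+1) = k+s+1 from rfl]
    linear_combination (((2*s).choose s : ℤ)) * (-((k:ℤ)+s+1) * h1 + (2*(s:ℤ)+1) * h2)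
      + ((k+s+1).choose (2*s+2) : ℤ) * ((2*(s:ℤ)+2) * h3 + ((s:ℤ)+1) * h5)

/-- The linearization coefficients `c(i,u,s) = C(s,i)C(s,u)C(i+u,s)`. -/
def CC (i u s : ℕ) : ℤ := (s.choose i : ℤ) * (s.choose u : ℤ) * ((i + u).choose s : ℤ)

lemma dagger (i u v : ℕ) :
    ((i:ℤ)+1)^2 * CC (i+1) u (v+1)
      = ((v:ℤ)+1)^2 * CC i u v
        + (((v:ℤ)+1)*((v:ℤ)+2) - (i:ℤ)*((i:ℤ)+1)) * CC i u (v+1) := by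
  unfold CC
  rw [show i+1+u = (i+u)+1 from by omega]
  have h1 := zChooseSucc (v+1) i
  have h2 : (((i+u)+1).choose (v+1) : ℤ) = ((i+u).choose v : ℤ) + ((i+u).choose (v+1) : ℤ) := by
    exact_mod_cast congrArg (fun x : ℕ => (x : ℤ)) (Nat.choose_succ_succ (i+u) v)
  have h3 := zChooseSucc (i+u) v
  have h4 := zSuccMulChoose v i
  have h5 := zChooseSucc (v+1) u
  have h6 := zSuccMulChoose v u
  push_cast at h1 h2 h3 h4 h5 h6 ⊢
  linear_combination (((i:ℤ)+1)^2 * ((v+1:ℕ).choose (i+1) : ℤ) * ((v+1:ℕ).choose u : ℤ)) * h2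
    + (((i:ℤ)+1) * ((v+1:ℕ).choose u : ℤ)
        * (((i+u).choose v : ℤ) + ((i+u).choose (v+1) : ℤ))) * h1
    + (-(((v:ℤ)+1) - i) * (((v+1:ℕ).choose i : ℤ)) * ((v+1:ℕ).choose u : ℤ)) * h3
    + (-((i+u).choose v : ℤ) * (((v:ℤ)+1) - u) * ((v+1:ℕ).choose u : ℤ)) * (h1 + h4)
    + (-((i+u).choose v : ℤ) * ((v:ℤ)+1) * ((v.choose i : ℤ))) * (h5 + h6)

lemma CC_top_zero (i u : ℕ) : CC i u (i+u+1) = 0 := by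
  simp [CC, Nat.choose_eq_zero_of_lt (by omega : i + u < i+u+1)]

/-- The main linearization identity:
`b_i(k)·b_u(k) = ∑_s C(s,i)C(s,u)C(i+u,s)·b_s(k)`. -/
lemma identI (i : ℕ) : ∀ u k : ℕ, BB i k * BB u k
    = ∑ s ∈ Finset.range (i+u+1), CC i u s * BB s k := by
  induction i with
  | zero =>
    intro u k
    have hb0 : BB 0 k = 1 := by simp [BB]
    rw [hb0, one_mul, show 0+u+1 = u+1 from by omega,
      Finset.sum_eq_single u
        (fun b hb hne => by
          have hb' : b < u := by
            have := Finset.mem_range.mp hb; omega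
          simp [CC, Nat.choose_eq_zero_of_lt hb'])
        (fun h => absurd (Finset.self_mem_range_succ u) h)]
    simp [CC]
  | succ i ih =>
    intro u k
    have hcancel : (((i:ℤ)+1)^2) ≠ 0 := by positivity
    apply mul_left_cancel₀ hcancel
    have step1 : ((i:ℤ)+1)^2 * (BB (i+1) k * BB u k)
        = ((k:ℤ)*(k+1) - i*(i+1)) * (BB i k * BB u k) := by
      linear_combination (-(BB u k)) * recR i k
    rw [step1, ih u k, Finset.mul_sum]
    have step2 : ∀ s ∈ Finset.range (i+u+1),
        ((k:ℤ)*(k+1) - i*(i+1)) * (CC i u s * BB s k)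
          = CC i u s * ((s:ℤ)+1)^2 * BB (s+1) k
            + ((s:ℤ)*((s:ℤ)+1) - i*(i+1)) * CC i u s * BB s k := by
      intro s _
      linear_combination (CC i u s) * recR s k
    rw [Finset.sum_congr rfl step2, Finset.sum_add_distrib]
    have step3 : ∑ s ∈ Finset.range (i+u+1), ((s:ℤ)*((s:ℤ)+1) - i*(i+1)) * CC i u s * BB s k
        = ∑ s ∈ Finset.range (i+u+2), ((s:ℤ)*((s:ℤ)+1) - i*(i+1)) * CC i u s * BB s k := by
      conv_rhs => rw [show i+u+2 = (i+u+1)+1 from rfl, Finset.sum_range_succ]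
      rw [CC_top_zero]
      ring
    rw [step3]
    have step4 : ∑ s ∈ Finset.range (i+u+2), ((s:ℤ)*((s:ℤ)+1) - i*(i+1)) * CC i u s * BB s k
        = (∑ s ∈ Finset.range (i+u+1),
            (((s:ℤ)+1)*((s:ℤ)+2) - i*(i+1)) * CC i u (s+1) * BB (s+1) k)
          + ((0:ℤ)*(0+1) - (i:ℤ)*((i:ℤ)+1)) * CC i u 0 * BB 0 k := by
      rw [show i+u+2 = (i+u+1)+1 from rfl,
        Finset.sum_range_succ' (fun s => ((s:ℤ)*((s:ℤ)+1) - i*(i+1)) * CC i u s * BB s k)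
        (i+u+1)]
      refine congrArg₂ (· + ·) (Finset.sum_congr rfl fun s _ => ?_) (by push_cast; ring)
      push_cast
      ring
    have hzero0 : ((0:ℤ)*(0+1) - (i:ℤ)*((i:ℤ)+1)) * CC i u 0 * BB 0 k = 0 := by
      rcases Nat.eq_zero_or_pos i with hi | hi
      · subst hi; push_cast; ring
      · simp [CC, Nat.choose_eq_zero_of_lt hi]
    rw [step4, hzero0, add_zero, ← Finset.sum_add_distrib]
    rw [show i+1+u+1 = (i+u+1)+1 from by omega, Finset.mul_sum,
      Finset.sum_range_succ' (fun s => ((i:ℤ)+1)^2 * (CC (i+1) u s * BB s k)) (i+u+1)]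
    have hzero1 : ((i:ℤ)+1)^2 * (CC (i+1) u 0 * BB 0 k) = 0 := by
      simp [CC, Nat.choose_eq_zero_of_lt (Nat.succ_pos i)]
    rw [hzero1, add_zero]
    apply Finset.sum_congr rfl
    intro s _
    have hd := dagger i u s
    linear_combination (-(BB (s+1) k)) * hd

lemma triIdent (i u w : ℕ) (hw : w ≤ i) :
    (u.choose i) * ((u+w).choose u) * ((i+u).choose (u+w))
      = ((2*i).choose i) * (i.choose w) * ((u+i).choose (2*i)) := by
  rcases lt_or_ge u i with hu | hu
  · rw [Nat.choose_eq_zero_of_lt hu,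
      Nat.choose_eq_zero_of_lt (by omega : u + i < 2*i)]
    ring
  · have e1 : (i+u).choose (u+w) * (u+w).choose u = (i+u).choose u * i.choose w := by
      have := Nat.choose_mul (n := i+u) (k := u+w) (s := u) (by omega)
      rwa [show i+u-u = i from by omega, show u+w-u = w from by omega] at this
    have e2 : (u+i).choose (2*i) * (2*i).choose i = (u+i).choose i * u.choose i := by
      have := Nat.choose_mul (n := u+i) (k := 2*i) (s := i) (by omega)
      rwa [show u+i-i = u from by omega, show 2*i-i = i from by omega] at this
    have e3 : (i+u).choose u = (u+i).choose i := by
      have := Nat.choose_symm (n := i+u) (k := u) (by omega)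
      rw [show i+u-u = i from by omega] at this
      rw [← this, Nat.add_comm i u]
    calc u.choose i * ((u+w).choose u) * ((i+u).choose (u+w))
        = u.choose i * ((i+u).choose (u+w) * (u+w).choose u) := by ring
      _ = u.choose i * ((u+i).choose i * i.choose w) := by rw [e1, e3]
      _ = (u+i).choose (2*i) * (2*i).choose i * i.choose w := by rw [e2]; ring
      _ = (2*i).choose i * i.choose w * ((u+i).choose (2*i)) := by ring

/-- `C(s,i)·C(k+i,2i)·b_s(k) = ∑_w C(s+w,i)·C(i,w)·C(s+i,2i)·b_{s+w}(k)`. -/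
lemma pmulB (i s k : ℕ) :
    (s.choose i : ℤ) * ((k + i).choose (2*i) : ℤ) * BB s k
      = ∑ w ∈ Finset.range (i+1),
          ((s+w).choose i * (i.choose w) * ((s+i).choose (2*i)) : ℕ) * BB (s+w) k := by
  have hc : ((2*i).choose i : ℤ) ≠ 0 := by
    exact_mod_cast (Nat.choose_pos (by omega : i ≤ 2*i)).ne'
  apply mul_left_cancel₀ hc
  have lhs_eq : ((2*i).choose i : ℤ) * ((s.choose i : ℤ) * ((k + i).choose (2*i) : ℤ) * BB s k)
      = (s.choose i : ℤ) * (BB i k * BB s k) := by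
    unfold BB; push_cast; ring
  rw [lhs_eq, identI i s k, Finset.mul_sum]
  -- kill the terms with v < s
  have hsplit : Finset.range (i+s+1) = Finset.Ico 0 (i+s+1) := by
    rw [Finset.range_eq_Ico]
  rw [hsplit, ← Finset.sum_Ico_consecutive
      (fun v => (s.choose i : ℤ) * (CC i s v * BB v k)) (Nat.zero_le s) (by omega : s ≤ i+s+1)]
  have hfirst : ∑ v ∈ Finset.Ico 0 s, (s.choose i : ℤ) * (CC i s v * BB v k) = 0 := by
    apply Finset.sum_eq_zero
    intro v hv
    have hv' : v < s := (Finset.mem_Ico.mp hv).2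
    simp [CC, Nat.choose_eq_zero_of_lt hv']
  rw [hfirst, zero_add, Finset.sum_Ico_eq_sum_range]
  rw [show i+s+1-s = i+1 from by omega, Finset.mul_sum]
  apply Finset.sum_congr rfl
  intro w hw
  have hw' : w ≤ i := by have := Finset.mem_range.mp hw; omega
  have key' := congrArg (fun x : ℕ => (x : ℤ)) (triIdent i s w hw')
  unfold CC
  push_cast at key' ⊢
  linear_combination (((s+w).choose i : ℤ) * BB (s+w) k) * key'

/-- `f` is an integer combination of `b_s` for `lo ≤ s ≤ n`. -/
def RepB (lo n : ℕ) (f : ℕ → ℤ) : Prop :=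
  ∃ c : ℕ → ℤ, (∀ s, s < lo → c s = 0) ∧
    ∀ k, f k = ∑ s ∈ Finset.range (n+1), c s * BB s k

/-- `f` is an integer combination of `b_s`, `lo ≤ s ≤ n`, with coefficients
divisible by `C(s,j)`. -/
def RepDD (j lo n : ℕ) (f : ℕ → ℤ) : Prop :=
  ∃ c : ℕ → ℤ, (∀ s, s < lo → c s = 0) ∧
    ∀ k, f k = ∑ s ∈ Finset.range (n+1), (s.choose j : ℤ) * c s * BB s k

lemma RepDD.rep {j lo n : ℕ} {f : ℕ → ℤ} (h : RepDD j lo n f) : RepB lo n f := by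
  obtain ⟨c, hsupp, hval⟩ := h
  exact ⟨fun s => (s.choose j : ℤ) * c s,
    fun s hs => by dsimp only; rw [hsupp s hs, mul_zero], hval⟩

lemma RepB.congr {lo n : ℕ} {f g : ℕ → ℤ} (h : RepB lo n f) (hfg : ∀ k, g k = f k) :
    RepB lo n g := by
  obtain ⟨c, hsupp, hval⟩ := h
  exact ⟨c, hsupp, fun k => (hfg k).trans (hval k)⟩

lemma RepDD.congr {j lo n : ℕ} {f g : ℕ → ℤ} (h : RepDD j lo n f) (hfg : ∀ k, g k = f k) :
    RepDD j lo n g := by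
  obtain ⟨c, hsupp, hval⟩ := h
  exact ⟨c, hsupp, fun k => (hfg k).trans (hval k)⟩

/-- Multiplying a representable function by `b_j` gives coefficients divisible by
`C(s,j)`. -/
lemma RepB.mulB {lo n : ℕ} {f : ℕ → ℤ} (h : RepB lo n f) (j : ℕ) :
    RepDD j (max lo j) (n+j) (fun k => f k * BB j k) := by
  obtain ⟨c, hsupp, hval⟩ := h
  refine ⟨fun v => if v < j then 0 else
      ∑ s ∈ Finset.range (n+1), c s * ((v.choose s : ℤ) * ((j+s).choose v : ℤ)), ?_, ?_⟩
  · intro v hv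
    dsimp only
    by_cases hvj : v < j
    · simp [hvj]
    · have hvlo : v < lo := by omega
      rw [if_neg hvj]
      apply Finset.sum_eq_zero
      intro s hs
      rcases lt_or_ge s lo with hslo | hslo
      · rw [hsupp s hslo]; ring
      · rw [Nat.choose_eq_zero_of_lt (by omega : v < s)]; push_cast; ring
  · intro k
    dsimp only
    have e1 : f k * BB j k
        = ∑ s ∈ Finset.range (n+1), ∑ v ∈ Finset.range (n+j+1), c s * (CC j s v * BB v k) := by
      rw [hval k, Finset.sum_mul]
      apply Finset.sum_congr rfl
      intro s hs
      calc c s * BB s k * BB j k = c s * (BB j k * BB s k) := by ring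
        _ = c s * ∑ v ∈ Finset.range (j+s+1), CC j s v * BB v k := by rw [identI j s k]
        _ = ∑ v ∈ Finset.range (j+s+1), c s * (CC j s v * BB v k) := by
            rw [Finset.mul_sum]
        _ = ∑ v ∈ Finset.range (n+j+1), c s * (CC j s v * BB v k) := by
            apply Finset.sum_subset
            · intro v hv
              have h1 := Finset.mem_range.mp hv
              have h2 := Finset.mem_range.mp hs
              exact Finset.mem_range.mpr (by omega)
            · intro v hv hnv
              have h1 : j + s < v := by
                have := Finset.mem_range.mp hv
                by_contra hcon
                exact hnv (Finset.mem_range.mpr (by omega))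
              simp [CC, Nat.choose_eq_zero_of_lt h1]
    rw [e1, Finset.sum_comm]
    apply Finset.sum_congr rfl
    intro v hv
    by_cases hvj : v < j
    · rw [if_pos hvj]
      rw [show (v.choose j : ℤ) * 0 * BB v k = 0 by ring]
      apply Finset.sum_eq_zero
      intro s _
      simp [CC, Nat.choose_eq_zero_of_lt hvj]
    · rw [if_neg hvj, Finset.mul_sum, Finset.sum_mul]
      apply Finset.sum_congr rfl
      intro s _
      unfold CC
      ring

/-- Multiplying by `C(k+j,2j)` preserves divisible representability. -/
lemma RepDD.mulP {j lo n : ℕ} {f : ℕ → ℤ} (h : RepDD j lo n f) :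
    RepDD j lo (n+j) (fun k => f k * ((k + j).choose (2*j) : ℤ)) := by
  obtain ⟨c, hsupp, hval⟩ := h
  refine ⟨fun v => ∑ s ∈ Finset.range (n+1), ∑ w ∈ Finset.range (j+1),
      if v = s+w then c s * ((j.choose w : ℤ) * ((s+j).choose (2*j) : ℤ)) else 0, ?_, ?_⟩
  · intro v hv
    dsimp only
    apply Finset.sum_eq_zero; intro s _
    apply Finset.sum_eq_zero; intro w _
    by_cases he : v = s+w
    · rw [if_pos he, hsupp s (by omega)]; ring
    · rw [if_neg he]
  · intro k
    dsimp only
    have e1 : f k * ((k + j).choose (2*j) : ℤ)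
        = ∑ s ∈ Finset.range (n+1), ∑ w ∈ Finset.range (j+1),
            c s * (((s+w).choose j * (j.choose w) * ((s+j).choose (2*j)) : ℕ) * BB (s+w) k) := by
      rw [hval k, Finset.sum_mul]
      apply Finset.sum_congr rfl
      intro s hs
      calc (s.choose j : ℤ) * c s * BB s k * ((k + j).choose (2*j) : ℤ)
          = c s * ((s.choose j : ℤ) * ((k + j).choose (2*j) : ℤ) * BB s k) := by ring
        _ = c s * ∑ w ∈ Finset.range (j+1),
              (((s+w).choose j * (j.choose w) * ((s+j).choose (2*j)) : ℕ) : ℤ) * BB (s+w) k := by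
            rw [pmulB j s k]
        _ = _ := by rw [Finset.mul_sum]
    rw [e1]
    have e2 : ∀ v, (v.choose j : ℤ) * (∑ s ∈ Finset.range (n+1), ∑ w ∈ Finset.range (j+1),
          if v = s+w then c s * ((j.choose w : ℤ) * ((s+j).choose (2*j) : ℤ)) else 0) * BB v k
        = ∑ s ∈ Finset.range (n+1), ∑ w ∈ Finset.range (j+1),
            (if v = s+w then (v.choose j : ℤ)
              * (c s * ((j.choose w : ℤ) * ((s+j).choose (2*j) : ℤ))) * BB v k else 0) := by
      intro v
      rw [Finset.mul_sum, Finset.sum_mul]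
      apply Finset.sum_congr rfl; intro s _
      rw [Finset.mul_sum, Finset.sum_mul]
      apply Finset.sum_congr rfl; intro w _
      split_ifs <;> ring
    rw [Finset.sum_congr rfl (fun v _ => e2 v)]
    conv_rhs => rw [Finset.sum_comm]
    apply Finset.sum_congr rfl; intro s hs
    conv_rhs => rw [Finset.sum_comm]
    apply Finset.sum_congr rfl; intro w hw
    rw [Finset.sum_ite_eq' (Finset.range (n+j+1)) (s+w)
      (fun v => (v.choose j : ℤ) * (c s * ((j.choose w : ℤ) * ((s+j).choose (2*j) : ℤ))) * BB v k)]
    have hmem : s + w ∈ Finset.range (n+j+1) := by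
      have h1 := Finset.mem_range.mp hs
      have h2 := Finset.mem_range.mp hw
      exact Finset.mem_range.mpr (by omega)
    rw [if_pos hmem]
    push_cast
    ring

lemma RepDD.mulPiter {j lo n : ℕ} {f : ℕ → ℤ} (h : RepDD j lo n f) (t : ℕ) :
    RepDD j lo (n + t*j) (fun k => f k * ((k + j).choose (2*j) : ℤ)^t) := by
  induction t with
  | zero =>
    have : n + 0*j = n := by ring
    rw [this]
    exact h.congr (fun k => by rw [pow_zero, mul_one])
  | succ t ih =>
    have e : n + t*j + j = n + (t+1)*j := by ring
    have := ih.mulP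
    rw [e] at this
    exact this.congr (fun k => by rw [pow_succ]; ring)

lemma repOne : RepB 0 0 (fun _ => 1) := by
  refine ⟨fun _ => 1, fun s hs => absurd hs (by omega), fun k => ?_⟩
  simp [BB]

lemma repProd {m : ℕ} (i : Fin m → ℕ) (r' : ℕ) (S : Finset (Fin m)) :
    RepB (S.sup i) ((r'+1) * ∑ j ∈ S, i j)
      (fun k => ∏ j ∈ S,
        ((k + i j).choose (2 * i j) : ℤ) ^ (r'+1) * ((2 * (i j)).choose (i j) : ℤ)) := by
  induction S using Finset.induction_on with
  | empty =>
    simp only [Finset.prod_empty, Finset.sum_empty, Finset.sup_empty, Nat.mul_zero]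
    exact repOne
  | @insert a S ha ih =>
    have h1 := (ih.mulB (i a)).mulPiter r'
    have h2 := h1.rep
    have elo : max (S.sup i) (i a) = (insert a S).sup i := by
      rw [Finset.sup_insert]
      exact (sup_comm _ _)
    have en : (r'+1) * ∑ j ∈ S, i j + i a + r' * i a = (r'+1) * ∑ j ∈ insert a S, i j := by
      rw [Finset.sum_insert ha]
      ring
    rw [elo, en] at h2
    apply h2.congr
    intro k
    rw [Finset.prod_insert ha]
    unfold BB
    push_cast
    ring

/-- For a positive integer `r`, a positive integer `m`, and nonnegative integers
`i 1, …, i m`, there exist integers `d s` (independent of `k`) such that for all `k`: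
`∏_{j=1}^{m} C(k+i_j,2i_j)^r·C(2i_j,i_j)
  = ∑_{s=max i_j}^{r(i_1+⋯+i_m)} d s · C(k+s,2s)·C(2s,s)`. -/
theorem prod_choose_pow_linear_combination (r m : ℕ) (hr : 0 < r) (hm : 0 < m)
    (i : Fin m → ℕ) :
    ∃ d : ℕ → ℤ, ∀ k : ℕ,
      (∏ j : Fin m,
        (((k + i j).choose (2 * i j) : ℤ)) ^ r * ((2 * (i j)).choose (i j) : ℤ)) =
        ∑ s ∈ Finset.Icc (Finset.univ.sup i) (r * ∑ j : Fin m, i j),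
          d s * ((k + s).choose (2 * s) : ℤ) * ((2 * s).choose s : ℤ) := by
  obtain ⟨r', rfl⟩ : ∃ r', r = r' + 1 := ⟨r - 1, by omega⟩
  obtain ⟨c, hsupp, hval⟩ := repProd i r' Finset.univ
  refine ⟨c, fun k => ?_⟩
  simp only at hval
  rw [hval k]
  set lo := Finset.univ.sup i with hlo
  set n := (r'+1) * ∑ j : Fin m, i j with hn
  have hlon : lo ≤ n := by
    have h1 : lo ≤ ∑ j : Fin m, i j := by
      apply Finset.sup_le
      intro j _
      exact Finset.single_le_sum (fun _ _ => Nat.zero_le _) (Finset.mem_univ j)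
    calc lo ≤ ∑ j : Fin m, i j := h1
      _ ≤ (r'+1) * ∑ j : Fin m, i j := Nat.le_mul_of_pos_left _ (by omega)
  have hIcc : Finset.Icc lo n = Finset.Ico lo (n+1) := by
    rw [Finset.Ico_add_one_right_eq_Icc]
  rw [hIcc, Finset.range_eq_Ico,
    ← Finset.sum_Ico_consecutive (fun s => c s * BB s k) (Nat.zero_le lo) (by omega : lo ≤ n+1)]
  have hfirst : ∑ s ∈ Finset.Ico 0 lo, c s * BB s k = 0 := by
    apply Finset.sum_eq_zero
    intro s hs
    rw [hsupp s (Finset.mem_Ico.mp hs).2]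
    ring
  rw [hfirst, zero_add]
  apply Finset.sum_congr rfl
  intro s _
  unfold BB
  ring
end
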